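/- arXiv:1310.3164 — 10 statements merged into one kernel-verified Lean document; each statement's English description precedes it below -/
import Mathlib

section
/- For every rook placement D ⊆ Φ⁺, the B-orbit of f_D is the union of the U-orbits of the forms f_{D,ξ}: Ω_D = ⋃_{ξ : D → ℂ∖{0}} Θ_{D,ξ}. -/
/-- The set of positive roots of `A_{n-1}`, encoded as pairs `(i,j)` with `1 ≤ j < i ≤ n`. -/
def PhiPos (n : ℕ) : Finset (ℕ × ℕ) :=
  (Finset.Icc 1 n ×ˢ Finset.Icc 1 n).filter (fun p => p.2 < p.1)

/-- `D` is a rook placement: a subset of `Φ⁺` whose distinct elements never share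
a row or a column. -/
def IsRP (n : ℕ) (D : Finset (ℕ × ℕ)) : Prop :=
  D ⊆ PhiPos n ∧ ∀ p ∈ D, ∀ q ∈ D, p ≠ q → p.1 ≠ q.1 ∧ p.2 ≠ q.2
/-- Strictly lower-triangular part of a matrix. -/
def lowPart {n : ℕ} (X : Matrix (Fin n) (Fin n) ℂ) : Matrix (Fin n) (Fin n) ℂ :=
  Matrix.of fun i j => if (j : ℕ) < (i : ℕ) then X i j else 0

/-- Upper-triangular matrix (an element of `B` must moreover be invertible). -/
def IsUpperTri {n : ℕ} (b : Matrix (Fin n) (Fin n) ℂ) : Prop :=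
  ∀ i j : Fin n, (j : ℕ) < (i : ℕ) → b i j = 0

/-- Upper unitriangular matrix, i.e. an element of `U`. -/
def IsUnitri {n : ℕ} (u : Matrix (Fin n) (Fin n) ℂ) : Prop :=
  IsUpperTri u ∧ ∀ i, u i i = 1

/-- The matrix `f_D` of a rook placement: entry `1` at the (1-based) positions in `D`. -/
def fD (n : ℕ) (D : Finset (ℕ × ℕ)) : Matrix (Fin n) (Fin n) ℂ :=
  Matrix.of fun i j => if ((i : ℕ) + 1, (j : ℕ) + 1) ∈ D then 1 else 0

/-- The matrix `f_{D,ξ}`: entry `ξ(i,j)` at the (1-based) positions `(i,j) ∈ D`. -/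
def fDxi (n : ℕ) (D : Finset (ℕ × ℕ)) (ξ : ℕ × ℕ → ℂ) : Matrix (Fin n) (Fin n) ℂ :=
  Matrix.of fun i j =>
    if ((i : ℕ) + 1, (j : ℕ) + 1) ∈ D then ξ ((i : ℕ) + 1, (j : ℕ) + 1) else 0

/-- The coadjoint action `b.λ = (b λ b⁻¹)_low`. -/
noncomputable def coact {n : ℕ} (b l : Matrix (Fin n) (Fin n) ℂ) :
    Matrix (Fin n) (Fin n) ℂ := lowPart (b * l * b⁻¹)

/-- The `B`-orbit `Ω_D = B.f_D`. -/
noncomputable def Omega (n : ℕ) (D : Finset (ℕ × ℕ)) : Set (Matrix (Fin n) (Fin n) ℂ) :=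
  {l | ∃ b, IsUnit b ∧ IsUpperTri b ∧ l = coact b (fD n D)}

/-- The `U`-orbit `Θ_{D,ξ} = U.f_{D,ξ}`. -/
noncomputable def Theta (n : ℕ) (D : Finset (ℕ × ℕ)) (ξ : ℕ × ℕ → ℂ) :
    Set (Matrix (Fin n) (Fin n) ℂ) :=
  {l | ∃ u, IsUnitri u ∧ l = coact u (fDxi n D ξ)}

open Matrix

/-- Solution of the multiplicative chain equations `t_i = ξ(i,j) t_j` for `(i,j) ∈ D`. -/
noncomputable def tfun (D : Finset (ℕ × ℕ)) (ξ : ℕ × ℕ → ℂ) (i : ℕ) : ℂ :=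
  if h : ∃ j, j < i ∧ (i, j) ∈ D then ξ (i, h.choose) * tfun D ξ h.choose else 1
termination_by i
decreasing_by exact h.choose_spec.1

lemma tfun_ne_zero {D : Finset (ℕ × ℕ)} {ξ : ℕ × ℕ → ℂ}
    (hξ : ∀ p ∈ D, ξ p ≠ 0) : ∀ i, tfun D ξ i ≠ 0 := by
  intro i
  induction i using Nat.strong_induction_on with
  | _ i ih =>
    rw [tfun]
    split
    · next h => exact mul_ne_zero (hξ _ h.choose_spec.2) (ih _ h.choose_spec.1)
    · exact one_ne_zero

lemma tfun_spec {n : ℕ} {D : Finset (ℕ × ℕ)} (hD : IsRP n D) (ξ : ℕ × ℕ → ℂ)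
    {i j : ℕ} (hij : (i, j) ∈ D) : tfun D ξ i = ξ (i, j) * tfun D ξ j := by
  have hji : j < i := by
    have := hD.1 hij
    simp [PhiPos, Finset.mem_filter] at this
    exact this.2
  have h : ∃ j', j' < i ∧ (i, j') ∈ D := ⟨j, hji, hij⟩
  rw [tfun, dif_pos h]
  have hc := h.choose_spec
  have : h.choose = j := by
    by_contra hne
    exact (hD.2 _ hc.2 _ hij (by simp [hne])).1 rfl
  rw [this]

lemma det_upperTri {n : ℕ} {b : Matrix (Fin n) (Fin n) ℂ} (hb : IsUpperTri b) :
    b.det = ∏ i, b i i :=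
  Matrix.det_of_upperTriangular (fun i j h => hb i j h)

lemma diag_ne_zero {n : ℕ} {b : Matrix (Fin n) (Fin n) ℂ} (hb : IsUpperTri b)
    (hu : IsUnit b) : ∀ k, b k k ≠ 0 := by
  have hdet : b.det ≠ 0 := ((Matrix.isUnit_iff_isUnit_det b).mp hu).ne_zero
  rw [det_upperTri hb] at hdet
  exact fun k h => hdet (Finset.prod_eq_zero (Finset.mem_univ k) h)

lemma diag_inv {n : ℕ} {d : Fin n → ℂ} (hd : ∀ k, d k ≠ 0) :
    (Matrix.diagonal d)⁻¹ = Matrix.diagonal (fun k => (d k)⁻¹) := by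
  apply Matrix.inv_eq_right_inv
  rw [Matrix.diagonal_mul_diagonal]
  convert Matrix.diagonal_one
  exact mul_inv_cancel₀ (hd _)

lemma conj_split {n : ℕ} (u : Matrix (Fin n) (Fin n) ℂ) {d : Fin n → ℂ}
    (hd : ∀ k, d k ≠ 0) (X : Matrix (Fin n) (Fin n) ℂ) :
    (u * diagonal d) * X * (u * diagonal d)⁻¹
      = u * (diagonal d * X * diagonal (fun k => (d k)⁻¹)) * u⁻¹ := by
  rw [Matrix.mul_inv_rev, diag_inv hd]
  simp only [Matrix.mul_assoc]

/-- Lemma 1.3: for every rook placement `D`, the `B`-orbit of `f_D` is the union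
over all maps `ξ : D → ℂ∖{0}` of the `U`-orbits `Θ_{D,ξ}`. -/
theorem omega_eq_iUnion_theta (n : ℕ) (hn : 1 ≤ n) (D : Finset (ℕ × ℕ)) (hD : IsRP n D) :
    Omega n D = ⋃ (ξ : ℕ × ℕ → ℂ) (_ : ∀ p ∈ D, ξ p ≠ 0), Theta n D ξ := by
  ext l
  simp only [Set.mem_iUnion]
  constructor
  · rintro ⟨b, hbU, hbT, rfl⟩
    have hd : ∀ k, b k k ≠ 0 := diag_ne_zero hbT hbU
    set d : Fin n → ℂ := fun k => b k k with hd_def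
    set u : Matrix (Fin n) (Fin n) ℂ := b * diagonal (fun k => (d k)⁻¹) with hu_def
    set ξ : ℕ × ℕ → ℂ := fun p =>
      if h : p.1 - 1 < n ∧ p.2 - 1 < n then d ⟨p.1 - 1, h.1⟩ * (d ⟨p.2 - 1, h.2⟩)⁻¹ else 1
      with hξ_def
    have hξ : ∀ p ∈ D, ξ p ≠ 0 := by
      intro p hp
      have hP := hD.1 hp
      simp only [PhiPos, Finset.mem_filter, Finset.mem_product, Finset.mem_Icc] at hP
      have hcond : p.1 - 1 < n ∧ p.2 - 1 < n := by omega
      rw [hξ_def]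
      simp only [dif_pos hcond]
      exact mul_ne_zero (hd _) (inv_ne_zero (hd _))
    have huni : IsUnitri u := by
      constructor
      · intro i j hij
        rw [hu_def, Matrix.mul_diagonal, hbT i j hij, zero_mul]
      · intro i
        rw [hu_def, Matrix.mul_diagonal]
        exact mul_inv_cancel₀ (hd i)
    refine ⟨ξ, hξ, u, huni, ?_⟩
    have hfdxi : diagonal d * fD n D * diagonal (fun k => (d k)⁻¹) = fDxi n D ξ := by
      ext i j
      rw [Matrix.mul_diagonal, Matrix.diagonal_mul]
      by_cases hmem : ((i : ℕ) + 1, (j : ℕ) + 1) ∈ D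
      · have hc : (i : ℕ) + 1 - 1 < n ∧ (j : ℕ) + 1 - 1 < n := by
          constructor <;> simpa using (by exact Fin.is_lt _)
        simp only [fD, fDxi, Matrix.of_apply, if_pos hmem, hξ_def, dif_pos hc, mul_one]
        congr 2 <;> exact Fin.ext (by simp)
      · simp [fD, fDxi, hmem]
    have hb_fact : b = u * diagonal d := by
      rw [hu_def, Matrix.mul_assoc, Matrix.diagonal_mul_diagonal]
      have : (fun k => (d k)⁻¹ * d k) = fun _ : Fin n => (1 : ℂ) := by
        funext k; exact inv_mul_cancel₀ (hd k)
      rw [this, Matrix.diagonal_one, mul_one]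
    show coact b (fD n D) = coact u (fDxi n D ξ)
    unfold coact
    rw [hb_fact, conj_split u hd, hfdxi]
  · rintro ⟨ξ, hξ, u, huni, rfl⟩
    set d : Fin n → ℂ := fun k => tfun D ξ ((k : ℕ) + 1) with hd_def
    have hd : ∀ k, d k ≠ 0 := fun k => tfun_ne_zero hξ _
    refine ⟨u * diagonal d, ?_, ?_, ?_⟩
    · rw [Matrix.isUnit_iff_isUnit_det, Matrix.det_mul, Matrix.det_diagonal]
      refine IsUnit.mul ?_ ?_
      · rw [det_upperTri huni.1]
        simp [huni.2]
      · exact isUnit_iff_ne_zero.mpr (Finset.prod_ne_zero_iff.mpr fun k _ => hd k)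
    · intro i j hij
      rw [Matrix.mul_diagonal, huni.1 i j hij, zero_mul]
    · have hfdxi : diagonal d * fD n D * diagonal (fun k => (d k)⁻¹) = fDxi n D ξ := by
        ext i j
        rw [Matrix.mul_diagonal, Matrix.diagonal_mul]
        by_cases hmem : ((i : ℕ) + 1, (j : ℕ) + 1) ∈ D
        · simp only [fD, fDxi, Matrix.of_apply, if_pos hmem, mul_one]
          simp only [hd_def]
          rw [tfun_spec hD ξ hmem, mul_assoc,
            mul_inv_cancel₀ (tfun_ne_zero hξ ((j : ℕ) + 1)), mul_one]
        · simp [fD, fDxi, hmem]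
      show coact u (fDxi n D ξ) = coact (u * diagonal d) (fD n D)
      unfold coact
      rw [conj_split u hd, hfdxi]
end

section
/- For every element u of the group U of upper unitriangular n×n complex matrices, every strictly lower-triangular n×n complex matrix f, and all 1 ≤ j < i ≤ n, one has rank π_{i,j}(u.f) = rank π_{i,j}(f). -/
/-- `rank π_{i,j}(X)`: the rank of the submatrix of `X` on rows `i, i+1, …, n` and
columns `1, …, j` (1-based coordinates). -/
noncomputable def piRank {n : ℕ} (X : Matrix (Fin n) (Fin n) ℂ) (i j : ℕ) : ℕ :=
  (X.submatrix (fun r : {r : Fin n // i ≤ (r : ℕ) + 1} => (r : Fin n))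
    (fun c : {c : Fin n // (c : ℕ) + 1 ≤ j} => (c : Fin n))).rank

/-- Restriction of a product to subtype submatrices, when cross terms vanish. -/
lemma submatrix_mul_sub {m : ℕ} {P Q S : Fin m → Prop} [DecidablePred Q]
    (A B : Matrix (Fin m) (Fin m) ℂ)
    (h : ∀ r p c : Fin m, P r → S c → ¬ Q p → A r p * B p c = 0) :
    (A * B).submatrix (fun r : {x : Fin m // P x} => (r : Fin m))
        (fun c : {x : Fin m // S x} => (c : Fin m))
      = (A.submatrix (fun r : {x : Fin m // P x} => (r : Fin m))
            (fun q : {x : Fin m // Q x} => (q : Fin m)))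
        * (B.submatrix (fun q : {x : Fin m // Q x} => (q : Fin m))
            (fun c : {x : Fin m // S x} => (c : Fin m))) := by
  ext r c
  simp only [Matrix.submatrix_apply, Matrix.mul_apply]
  rw [← Finset.sum_filter_of_ne (s := Finset.univ) (p := Q)
      (f := fun p => A (r : Fin m) p * B p (c : Fin m))
      (fun p _ hne => by by_contra hq; exact hne (h r p c r.2 c.2 hq)),
    Finset.sum_subtype (p := Q) _ (by simp) (fun p => A (r : Fin m) p * B p (c : Fin m))]

/-- For every `u ∈ U`, every strictly lower-triangular `f`, and all `1 ≤ j < i ≤ n`,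
`rank π_{i,j}(u.f) = rank π_{i,j}(f)`. -/
theorem piRank_coact_unitriangular (n : ℕ) (u f : Matrix (Fin n) (Fin n) ℂ)
    (hu : IsUnitri u) (hf : ∀ a b : Fin n, ¬ ((b : ℕ) < (a : ℕ)) → f a b = 0)
    (i j : ℕ) (h1 : 1 ≤ j) (h2 : j < i) (h3 : i ≤ n) :
    piRank (coact u f) i j = piRank f i j := by
  classical
  obtain ⟨hutri, hudiag⟩ := hu
  have hBT : u.BlockTriangular id := fun a b hab => hutri a b hab
  have hdet : u.det = 1 := by
    rw [Matrix.det_of_upperTriangular hBT]; simp [hudiag]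
  have hunit : IsUnit u.det := by rw [hdet]; exact isUnit_one
  haveI : Invertible u := u.invertibleOfIsUnitDet hunit
  have hinvBT : u⁻¹.BlockTriangular id :=
    Matrix.blockTriangular_inv_of_blockTriangular hBT
  set P : Fin n → Prop := fun r => i ≤ (r : ℕ) + 1 with hP
  set S : Fin n → Prop := fun c => (c : ℕ) + 1 ≤ j with hS
  -- the lowPart truncation does not affect the submatrix
  have hlow : (coact u f).submatrix (fun r : {x : Fin n // P x} => (r : Fin n))
      (fun c : {x : Fin n // S x} => (c : Fin n))
      = (u * f * u⁻¹).submatrix (fun r : {x : Fin n // P x} => (r : Fin n))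
        (fun c : {x : Fin n // S x} => (c : Fin n)) := by
    ext r c
    have hc : ((c : Fin n) : ℕ) < ((r : Fin n) : ℕ) := by
      have h1 : ((c : Fin n) : ℕ) + 1 ≤ j := c.2
      have h2' : i ≤ ((r : Fin n) : ℕ) + 1 := r.2
      omega
    simp only [coact, lowPart, Matrix.submatrix_apply, Matrix.of_apply, if_pos hc]
  -- split off the right factor
  have hright : (u * f * u⁻¹).submatrix (fun r : {x : Fin n // P x} => (r : Fin n))
      (fun c : {x : Fin n // S x} => (c : Fin n))
      = ((u * f).submatrix (fun r : {x : Fin n // P x} => (r : Fin n))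
          (fun q : {x : Fin n // S x} => (q : Fin n)))
        * ((u⁻¹).submatrix (fun q : {x : Fin n // S x} => (q : Fin n))
          (fun c : {x : Fin n // S x} => (c : Fin n))) := by
    refine submatrix_mul_sub (P := P) (Q := S) (S := S) _ _ ?_
    intro r p c _ hc hp
    have : u⁻¹ p c = 0 := hinvBT (by simp only [id]; simp only [hS] at hc hp; omega)
    rw [this, mul_zero]
  -- split off the left factor
  have hleft : (u * f).submatrix (fun r : {x : Fin n // P x} => (r : Fin n))
      (fun q : {x : Fin n // S x} => (q : Fin n))
      = ((u).submatrix (fun r : {x : Fin n // P x} => (r : Fin n))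
          (fun q : {x : Fin n // P x} => (q : Fin n)))
        * ((f).submatrix (fun q : {x : Fin n // P x} => (q : Fin n))
          (fun c : {x : Fin n // S x} => (c : Fin n))) := by
    refine submatrix_mul_sub (P := P) (Q := P) (S := S) _ _ ?_
    intro r p c hr _ hp
    have : u r p = 0 := hutri r p (by simp only [hP] at hr hp; omega)
    rw [this, zero_mul]
  -- invertibility of the two corner blocks
  have hPblock : IsUnit ((u).submatrix (fun r : {x : Fin n // P x} => (r : Fin n))
      (fun q : {x : Fin n // P x} => (q : Fin n))).det := by
    have h1 : (u⁻¹ * u).submatrix (fun r : {x : Fin n // P x} => (r : Fin n))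
        (fun c : {x : Fin n // P x} => (c : Fin n))
        = ((u⁻¹).submatrix (fun r : {x : Fin n // P x} => (r : Fin n))
            (fun q : {x : Fin n // P x} => (q : Fin n)))
          * ((u).submatrix (fun q : {x : Fin n // P x} => (q : Fin n))
            (fun c : {x : Fin n // P x} => (c : Fin n))) := by
      refine submatrix_mul_sub (P := P) (Q := P) (S := P) _ _ ?_
      intro r p c hr _ hp
      have : u⁻¹ r p = 0 := hinvBT (by simp only [id]; simp only [hP] at hr hp; omega)
      rw [this, zero_mul]
    rw [Matrix.nonsing_inv_mul u hunit,
      Matrix.submatrix_one _ (fun a b hab => Subtype.ext hab)] at h1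
    have := congrArg Matrix.det h1
    rw [Matrix.det_one, Matrix.det_mul] at this
    exact IsUnit.of_mul_eq_one _ (by rw [mul_comm]; exact this.symm)
  have hSblock : IsUnit ((u⁻¹).submatrix (fun r : {x : Fin n // S x} => (r : Fin n))
      (fun q : {x : Fin n // S x} => (q : Fin n))).det := by
    have h1 : (u * u⁻¹).submatrix (fun r : {x : Fin n // S x} => (r : Fin n))
        (fun c : {x : Fin n // S x} => (c : Fin n))
        = ((u).submatrix (fun r : {x : Fin n // S x} => (r : Fin n))
            (fun q : {x : Fin n // S x} => (q : Fin n)))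
          * ((u⁻¹).submatrix (fun q : {x : Fin n // S x} => (q : Fin n))
            (fun c : {x : Fin n // S x} => (c : Fin n))) := by
      refine submatrix_mul_sub (P := S) (Q := S) (S := S) _ _ ?_
      intro r p c _ hc hp
      have : u⁻¹ p c = 0 := hinvBT (by simp only [id]; simp only [hS] at hc hp; omega)
      rw [this, mul_zero]
    rw [Matrix.mul_nonsing_inv u hunit,
      Matrix.submatrix_one _ (fun a b hab => Subtype.ext hab)] at h1
    have := congrArg Matrix.det h1
    rw [Matrix.det_one, Matrix.det_mul] at this
    exact IsUnit.of_mul_eq_one _ (by rw [mul_comm]; exact this.symm)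
  -- conclude
  unfold piRank
  rw [hlow, hright, hleft, Matrix.rank_mul_eq_left_of_isUnit_det _ _ hSblock,
    Matrix.rank_mul_eq_right_of_isUnit_det _ _ hPblock]
end

section
/- Let D, D' ⊆ Φ⁺ be rook placements. If Ω_D is contained in the closure of Ω_{D'}, then D ≤ D', i.e. (R_D)_{i,j} ≤ (R_{D'})_{i,j} for all i, j. -/
/-- The rank matrix: `(R_D)_{i,j} = #{(p,q) ∈ D : p ≥ i, q ≤ j}` for `i > j`, else `0`. -/
def RD (D : Finset (ℕ × ℕ)) (i j : ℕ) : ℕ :=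
  if j < i then (D.filter (fun p => i ≤ p.1 ∧ p.2 ≤ j)).card else 0

/-- The partial order on rook placements: `D ≤ D'` iff `R_D ≤ R_{D'}` entrywise. -/
def rpLE (D D' : Finset (ℕ × ℕ)) : Prop := ∀ i j, RD D i j ≤ RD D' i j

/-- Strict version of the order on rook placements. -/
def rpLT (D D' : Finset (ℕ × ℕ)) : Prop := rpLE D D' ∧ D ≠ D'
noncomputable def Pmat (n i : ℕ) : Matrix (Fin n) (Fin n) ℂ :=
  Matrix.diagonal (fun p => if i ≤ (p : ℕ) + 1 then 1 else 0)

noncomputable def Qmat (n j : ℕ) : Matrix (Fin n) (Fin n) ℂ :=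
  Matrix.diagonal (fun q => if (q : ℕ) + 1 ≤ j then 1 else 0)

lemma PXQ_apply (n i j : ℕ) (X : Matrix (Fin n) (Fin n) ℂ) (p q : Fin n) :
    (Pmat n i * X * Qmat n j) p q
      = if i ≤ (p : ℕ) + 1 ∧ (q : ℕ) + 1 ≤ j then X p q else 0 := by
  simp only [Pmat, Qmat, Matrix.mul_diagonal, Matrix.diagonal_mul]
  split_ifs <;> first | tauto | ring

lemma PlowQ (n i j : ℕ) (hij : j < i) (M : Matrix (Fin n) (Fin n) ℂ) :
    Pmat n i * lowPart M * Qmat n j = Pmat n i * M * Qmat n j := by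
  ext p q
  rw [PXQ_apply, PXQ_apply]
  split_ifs with h
  · have : (q : ℕ) < (p : ℕ) := by omega
    simp only [lowPart, Matrix.of_apply, if_pos this]
  · rfl

lemma Pb_eq (n i : ℕ) (b : Matrix (Fin n) (Fin n) ℂ) (hb : IsUpperTri b) :
    Pmat n i * b = Pmat n i * b * Pmat n i := by
  ext p q
  simp only [Pmat, Matrix.mul_diagonal, Matrix.diagonal_mul]
  by_cases hq : i ≤ (q : ℕ) + 1
  · simp [hq]
  · rw [if_neg hq, mul_zero]
    by_cases hp : i ≤ (p : ℕ) + 1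
    · rw [hb p q (by omega), mul_zero]
    · simp [hp]

lemma bQ_eq (n j : ℕ) (c : Matrix (Fin n) (Fin n) ℂ) (hc : IsUpperTri c) :
    c * Qmat n j = Qmat n j * (c * Qmat n j) := by
  ext p q
  simp only [Qmat, Matrix.mul_diagonal, Matrix.diagonal_mul]
  by_cases hp : (p : ℕ) + 1 ≤ j
  · simp [hp]
  · by_cases hq : (q : ℕ) + 1 ≤ j
    · rw [hc p q (by omega)]
      simp
    · simp [hq]

lemma submatrix_factor {n k : ℕ} (M : Matrix (Fin n) (Fin n) ℂ) (f g : Fin k → Fin n) :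
    M.submatrix f g = (1 : Matrix (Fin n) (Fin n) ℂ).submatrix f id * M
      * (1 : Matrix (Fin n) (Fin n) ℂ).submatrix id g := by
  ext a b
  simp [Matrix.mul_apply, Matrix.one_apply, Finset.sum_ite_eq]

lemma rank_submatrix_le' {n k : ℕ} (M : Matrix (Fin n) (Fin n) ℂ) (f g : Fin k → Fin n) :
    (M.submatrix f g).rank ≤ M.rank := by
  rw [submatrix_factor M f g, Matrix.mul_assoc]
  exact (Matrix.rank_mul_le_right _ _).trans (Matrix.rank_mul_le_left _ _)

open Module Submodule in
lemma rank_fD_le (n : ℕ) (E : Finset (ℕ × ℕ)) : (fD n E).rank ≤ E.card := by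
  classical
  rw [Matrix.rank, Matrix.range_mulVecLin]
  set T : Finset (Fin n → ℂ) :=
    E.image (fun x => fun p : Fin n => if ((p : ℕ) + 1, x.2) ∈ E then (1:ℂ) else 0) with hT
  have hsub : Set.range (fD n E).transpose ⊆ insert 0 (T : Set (Fin n → ℂ)) := by
    rintro _ ⟨q, rfl⟩
    by_cases hq : ∃ x ∈ E, x.2 = (q : ℕ) + 1
    · obtain ⟨x, hx, hx2⟩ := hq
      refine Set.mem_insert_iff.mpr (Or.inr ?_)
      refine Finset.mem_coe.mpr (Finset.mem_image.mpr ⟨x, hx, ?_⟩)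
      funext p
      simp [fD, hx2]
    · refine Set.mem_insert_iff.mpr (Or.inl ?_)
      funext p
      push_neg at hq
      simp only [Matrix.transpose_apply, fD, Matrix.of_apply]
      rw [if_neg fun hmem => hq _ hmem rfl]
      rfl
  calc finrank ℂ (span ℂ (Set.range (fD n E).transpose))
      ≤ finrank ℂ (span ℂ (insert 0 (T : Set (Fin n → ℂ)))) :=
        Submodule.finrank_mono (span_mono hsub)
    _ = finrank ℂ (span ℂ (T : Set (Fin n → ℂ))) := by rw [span_insert_zero]
    _ ≤ T.card := finrank_span_finset_le_card T
    _ ≤ E.card := Finset.card_image_le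

lemma PfDQ (n i j : ℕ) (D' : Finset (ℕ × ℕ)) :
    Pmat n i * fD n D' * Qmat n j
      = fD n (D'.filter (fun p => i ≤ p.1 ∧ p.2 ≤ j)) := by
  ext p q
  rw [PXQ_apply]
  simp only [fD, Matrix.of_apply, Finset.mem_filter]
  split_ifs <;> tauto

lemma rank_PlQ_le (n i j : ℕ) (hij : j < i) (D' : Finset (ℕ × ℕ))
    (b : Matrix (Fin n) (Fin n) ℂ) (hbu : IsUnit b) (hbt : IsUpperTri b) :
    (Pmat n i * lowPart (b * fD n D' * b⁻¹) * Qmat n j).rank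
      ≤ (D'.filter (fun p => i ≤ p.1 ∧ p.2 ≤ j)).card := by
  haveI := hbu.invertible
  have hbt' : IsUpperTri b⁻¹ := by
    have h : Matrix.BlockTriangular b (id : Fin n → Fin n) := fun p q h => hbt p q h
    have h2 := Matrix.blockTriangular_inv_of_blockTriangular h
    exact fun p q hpq => h2 hpq
  set P := Pmat n i
  set Q := Qmat n j
  set X := fD n D'
  have h1 := Pb_eq n i b hbt
  have h2 := bQ_eq n j b⁻¹ hbt'
  have hfac : P * (b * X * b⁻¹) * Q
      = (P * b) * ((P * X * Q) * (b⁻¹ * Q)) := by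
    calc P * (b * X * b⁻¹) * Q
        = (P * b) * X * (b⁻¹ * Q) := by simp only [Matrix.mul_assoc]
      _ = (P * b * P) * X * (Q * (b⁻¹ * Q)) := by rw [← h1, ← h2]
      _ = (P * b) * ((P * X * Q) * (b⁻¹ * Q)) := by simp only [Matrix.mul_assoc]
  calc (P * lowPart (b * X * b⁻¹) * Q).rank
      = (P * (b * X * b⁻¹) * Q).rank := by rw [PlowQ n i j hij]
    _ = ((P * b) * ((P * X * Q) * (b⁻¹ * Q))).rank := by rw [hfac]
    _ ≤ ((P * X * Q) * (b⁻¹ * Q)).rank := Matrix.rank_mul_le_right _ _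
    _ ≤ (P * X * Q).rank := Matrix.rank_mul_le_left _ _
    _ ≤ _ := by rw [PfDQ]; exact rank_fD_le _ _

/-- Theorem 1.5: if `Ω_D` is contained in the closure of `Ω_{D'}`, then `D ≤ D'`,
i.e. `(R_D)_{i,j} ≤ (R_{D'})_{i,j}` for all `i, j`. -/
theorem rpLE_of_omega_subset_closure (n : ℕ) (D D' : Finset (ℕ × ℕ))
    (hD : IsRP n D) (hD' : IsRP n D')
    (h : Omega n D ⊆ closure (Omega n D')) :
    rpLE D D' := by
  classical
  intro i j
  by_cases hij : j < i
  swap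
  · simp [RD, hij]
  simp only [RD, if_pos hij]
  by_contra hlt
  push_neg at hlt
  set r' := (D'.filter (fun p => i ≤ p.1 ∧ p.2 ≤ j)).card with hr'
  have hcard : r' + 1 ≤ (D.filter (fun p => i ≤ p.1 ∧ p.2 ≤ j)).card := hlt
  obtain ⟨S, hS, hScard⟩ := Finset.exists_subset_card_eq hcard
  have hPhi : ∀ p ∈ D, 1 ≤ p.1 ∧ p.1 ≤ n ∧ 1 ≤ p.2 ∧ p.2 ≤ n ∧ p.2 < p.1 := by
    intro p hp
    have := hD.1 hp
    simp only [PhiPos, Finset.mem_filter, Finset.mem_product, Finset.mem_Icc] at this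
    omega
  set e : {x // x ∈ S} ≃ Fin S.card := S.equivFin with he
  set σ : Fin (r' + 1) → ℕ × ℕ := fun a => (e.symm (Fin.cast hScard.symm a) : ℕ × ℕ) with hσ
  have hσinj : Function.Injective σ := fun a b hab => by
    have h2 := e.symm.injective (Subtype.ext hab)
    have h3 : (Fin.cast hScard.symm a : ℕ) = (Fin.cast hScard.symm b : ℕ) :=
      congrArg Fin.val h2
    exact Fin.ext h3
  have hσS : ∀ a, σ a ∈ S := fun a => (e.symm (Fin.cast hScard.symm a)).2
  have hσD : ∀ a, σ a ∈ D := fun a => (Finset.mem_filter.mp (hS (hσS a))).1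
  have hσreg : ∀ a, i ≤ (σ a).1 ∧ (σ a).2 ≤ j := fun a =>
    (Finset.mem_filter.mp (hS (hσS a))).2
  set f : Fin (r' + 1) → Fin n := fun a =>
    ⟨(σ a).1 - 1, by have := hPhi _ (hσD a); omega⟩ with hf
  set g : Fin (r' + 1) → Fin n := fun a =>
    ⟨(σ a).2 - 1, by have := hPhi _ (hσD a); omega⟩ with hg
  set F : Matrix (Fin n) (Fin n) ℂ → ℂ :=
    fun X => ((Pmat n i * X * Qmat n j).submatrix f g).det with hF
  have hFcont : Continuous F := by
    apply Continuous.matrix_det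
    apply Continuous.matrix_submatrix
    exact (continuous_const.matrix_mul continuous_id).matrix_mul continuous_const
  have hzero : ∀ l ∈ Omega n D', F l = 0 := by
    rintro l ⟨b, hbu, hbt, rfl⟩
    by_contra hne
    have hUnit : IsUnit ((Pmat n i * coact b (fD n D') * Qmat n j).submatrix f g) :=
      (Matrix.isUnit_iff_isUnit_det _).mpr (isUnit_iff_ne_zero.mpr hne)
    have h1 : ((Pmat n i * coact b (fD n D') * Qmat n j).submatrix f g).rank = r' + 1 := by
      rw [Matrix.rank_of_isUnit _ hUnit, Fintype.card_fin]
    have h2 := rank_submatrix_le' (Pmat n i * coact b (fD n D') * Qmat n j) f g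
    have h3 : (Pmat n i * coact b (fD n D') * Qmat n j).rank ≤ r' := by
      simpa only [coact] using rank_PlQ_le n i j hij D' b hbu hbt
    omega
  have hclosed : closure (Omega n D') ⊆ F ⁻¹' {0} :=
    closure_minimal (fun l hl => hzero l hl)
      (IsClosed.preimage hFcont isClosed_singleton)
  have hfDlow : lowPart (fD n D) = fD n D := by
    ext p q
    simp only [lowPart, Matrix.of_apply]
    by_cases hpq : (q : ℕ) < (p : ℕ)
    · rw [if_pos hpq]
    · rw [if_neg hpq]
      symm
      simp only [fD, Matrix.of_apply]
      rw [if_neg]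
      intro hmem
      have := hPhi _ hmem
      omega
  have hfDmem : fD n D ∈ Omega n D := by
    refine ⟨1, isUnit_one, fun p q hpq => Matrix.one_apply_ne (Fin.ne_of_val_ne (by omega)), ?_⟩
    simp [coact, inv_one, hfDlow]
  have hfD0 : F (fD n D) = 0 := hclosed (h hfDmem)
  have hone : (Pmat n i * fD n D * Qmat n j).submatrix f g = 1 := by
    ext a b
    rw [Matrix.submatrix_apply, PXQ_apply]
    have ha := hPhi _ (hσD a)
    have hb := hPhi _ (hσD b)
    have hreg_a := hσreg a
    have hreg_b := hσreg b
    rw [if_pos (by constructor <;> [simp only [hf]; simp only [hg]] <;> omega)]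
    simp only [fD, Matrix.of_apply]
    have hcoord : (((f a : ℕ)) + 1, ((g b : ℕ)) + 1) = ((σ a).1, (σ b).2) := by
      simp only [hf, hg]
      exact Prod.ext (by omega) (by omega)
    rw [hcoord]
    by_cases hab : a = b
    · subst hab
      rw [if_pos (by rw [Prod.mk.eta]; exact hσD a), Matrix.one_apply_eq]
    · rw [Matrix.one_apply_ne hab, if_neg]
      intro hmem
      have hxa : ((σ a).1, (σ b).2) = σ a := by
        by_contra hne'
        exact (hD.2 _ hmem _ (hσD a) hne').1 rfl
      have hxb : ((σ a).1, (σ b).2) = σ b := by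
        by_contra hne'
        exact (hD.2 _ hmem _ (hσD b) hne').2 rfl
      exact hab (hσinj (hxa.symm.trans hxb))
  rw [hF] at hfD0
  simp only at hfD0
  rw [hone, Matrix.det_one] at hfD0
  exact one_ne_zero hfD0
end

section
/- Let D, D' ⊆ Φ⁺ be rook placements. If the rank matrices coincide, R_D = R_{D'}, then D = D'. -/
private lemma rp_key (D : Finset (ℕ × ℕ)) (i j : ℕ) (hj : 1 ≤ j) :
    (if (i, j) ∈ D then 1 else 0)
      + (D.filter (fun p => i + 1 ≤ p.1 ∧ p.2 ≤ j)).card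
      + (D.filter (fun p => i ≤ p.1 ∧ p.2 ≤ j - 1)).card
    = (D.filter (fun p => i ≤ p.1 ∧ p.2 ≤ j)).card
      + (D.filter (fun p => i + 1 ≤ p.1 ∧ p.2 ≤ j - 1)).card := by
  classical
  have hind : (if (i, j) ∈ D then 1 else 0)
      = (D.filter (fun p => p = (i, j))).card := by
    split_ifs with hmem
    · rw [Finset.filter_eq']
      simp [hmem]
    · rw [Finset.filter_eq']
      simp [hmem]
  rw [hind]
  simp only [Finset.card_filter]
  rw [← Finset.sum_add_distrib, ← Finset.sum_add_distrib, ← Finset.sum_add_distrib]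
  apply Finset.sum_congr rfl
  rintro ⟨a, b⟩ _
  simp only [Prod.mk.injEq]
  split_ifs <;> omega

private lemma rp_mem_of_rank_eq (n : ℕ) (D D' : Finset (ℕ × ℕ))
    (hD : IsRP n D) (hD' : IsRP n D')
    (h : ∀ i j, RD D i j = RD D' i j) :
    ∀ p ∈ D, p ∈ D' := by
  rintro ⟨a, b⟩ hmem
  have hphi := hD.1 hmem
  simp only [PhiPos, Finset.mem_filter, Finset.mem_product, Finset.mem_Icc] at hphi
  have hba : b < a := hphi.2
  have hb1 : 1 ≤ b := hphi.1.2.1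
  -- equalities of the four filter cardinalities
  have f1 : (D.filter (fun p => a ≤ p.1 ∧ p.2 ≤ b)).card
      = (D'.filter (fun p => a ≤ p.1 ∧ p.2 ≤ b)).card := by
    have := h a b; simpa [RD, hba] using this
  have f2 : (D.filter (fun p => a + 1 ≤ p.1 ∧ p.2 ≤ b)).card
      = (D'.filter (fun p => a + 1 ≤ p.1 ∧ p.2 ≤ b)).card := by
    have := h (a + 1) b
    simpa [RD, Nat.lt_succ_of_lt hba] using this
  have f3 : (D.filter (fun p => a ≤ p.1 ∧ p.2 ≤ b - 1)).card
      = (D'.filter (fun p => a ≤ p.1 ∧ p.2 ≤ b - 1)).card := by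
    have := h a (b - 1)
    have hlt : b - 1 < a := by omega
    simpa [RD, hlt] using this
  have f4 : (D.filter (fun p => a + 1 ≤ p.1 ∧ p.2 ≤ b - 1)).card
      = (D'.filter (fun p => a + 1 ≤ p.1 ∧ p.2 ≤ b - 1)).card := by
    have := h (a + 1) (b - 1)
    have hlt : b - 1 < a + 1 := by omega
    simpa [RD, hlt] using this
  have k1 := rp_key D a b hb1
  have k2 := rp_key D' a b hb1
  simp only [hmem, if_true] at k1
  by_contra hmem'
  simp only [hmem', if_false] at k2
  omega

/-- If the rank matrices of two rook placements coincide, the placements are equal. -/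
theorem rp_eq_of_rank_eq (n : ℕ) (D D' : Finset (ℕ × ℕ))
    (hD : IsRP n D) (hD' : IsRP n D')
    (h : ∀ i j, RD D i j = RD D' i j) :
    D = D' := by
  apply Finset.Subset.antisymm
  · exact fun p hp => rp_mem_of_rank_eq n D D' hD hD' h p hp
  · exact fun p hp => rp_mem_of_rank_eq n D' D hD' hD (fun i j => (h i j).symm) p hp
end

section
/- For every rook placement D ⊆ Φ⁺, the subspace 𝔭 is a Lie subalgebra of 𝔫, i.e. 𝔭 is closed under the commutator [x,y] = xy − yx. -/
/-- The set `M = M_{j_1} ∪ … ∪ M_{j_s}` associated with a rook placement `D`: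
columns `j` are processed in increasing order, and for the rook `(i,j)` of `D` in
column `j` (if any) one adds `M_j = {(i,q) : j < q < i, (q,j) ∉ (previous M's)}`. -/
def Mset (n : ℕ) (D : Finset (ℕ × ℕ)) : Finset (ℕ × ℕ) :=
  (List.range (n + 1)).foldl
    (fun acc j =>
      acc ∪ (D.filter (fun p => p.2 = j)).biUnion
        (fun p => ((Finset.Ioo j p.1).filter (fun q => (q, j) ∉ acc)).image
          (fun q => (p.1, q))))
    ∅

/-- Membership in the subspace `𝔭 ⊆ 𝔫`, the linear span of the matrix units
`e_{j,i}` with `(i,j) ∈ Φ⁺ ∖ M`: a matrix lies in `𝔭` iff it is strictly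
upper-triangular and vanishes at every position coming from `M`. -/
def inP (n : ℕ) (D : Finset (ℕ × ℕ)) (x : Matrix (Fin n) (Fin n) ℂ) : Prop :=
  ∀ a b : Fin n, (¬ a < b ∨ ((b : ℕ) + 1, (a : ℕ) + 1) ∈ Mset n D) → x a b = 0

namespace RookAux

/-- One step of the fold defining `Mset`. -/
def step (D : Finset (ℕ × ℕ)) (acc : Finset (ℕ × ℕ)) (j : ℕ) : Finset (ℕ × ℕ) :=
  acc ∪ (D.filter (fun p => p.2 = j)).biUnion
    (fun p => ((Finset.Ioo j p.1).filter (fun q => (q, j) ∉ acc)).image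
      (fun q => (p.1, q)))

/-- The partial `M`-sets. -/
def A (D : Finset (ℕ × ℕ)) : ℕ → Finset (ℕ × ℕ)
  | 0 => ∅
  | k + 1 => step D (A D k) k

lemma foldl_range (D : Finset (ℕ × ℕ)) (k : ℕ) :
    (List.range k).foldl (step D) ∅ = A D k := by
  induction k with
  | zero => rfl
  | succ k ih =>
    rw [List.range_succ, List.foldl_append]
    simp [A, ih]

lemma mset_eq (n : ℕ) (D : Finset (ℕ × ℕ)) : Mset n D = A D (n + 1) := by
  rw [← foldl_range]; rfl

lemma A_mono (D : Finset (ℕ × ℕ)) {k m : ℕ} (h : k ≤ m) : A D k ⊆ A D m := by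
  induction m with
  | zero => simp [Nat.le_zero.mp h]
  | succ m ih =>
    rcases Nat.lt_or_ge k (m + 1) with h' | h'
    · exact (ih (Nat.lt_succ_iff.mp h')).trans (Finset.subset_union_left)
    · have : k = m + 1 := le_antisymm h h'
      simp [this]

lemma mem_step {D acc : Finset (ℕ × ℕ)} {j : ℕ} {p : ℕ × ℕ} :
    p ∈ step D acc j ↔ p ∈ acc ∨
      ∃ r ∈ D, r.2 = j ∧ ∃ q, (j < q ∧ q < r.1) ∧ (q, j) ∉ acc ∧ (r.1, q) = p := by
  simp [step, Finset.mem_biUnion, Finset.mem_filter, Finset.mem_image, Finset.mem_Ioo,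
    and_assoc]

/-- Every element of `A D k` was added at some column `j < k`. -/
lemma exists_added {D : Finset (ℕ × ℕ)} {k : ℕ} {i q : ℕ} (h : (i, q) ∈ A D k) :
    ∃ j, j < k ∧ (i, j) ∈ D ∧ j < q ∧ q < i ∧ (q, j) ∉ A D j ∧ (i, q) ∈ A D (j + 1) := by
  induction k with
  | zero => simp [A] at h
  | succ k ih =>
    rw [A, mem_step] at h
    rcases h with h | ⟨r, hr, hr2, t, ⟨hjt, hti⟩, hnt, heq⟩
    · obtain ⟨j, hj, rest⟩ := ih h
      exact ⟨j, Nat.lt_succ_of_lt hj, rest⟩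
    · injection heq with h1 h2
      subst h1; subst h2
      refine ⟨k, Nat.lt_succ_self k, ?_, hjt, hti, hnt, ?_⟩
      · rwa [← hr2, Prod.mk.eta]
      · rw [A, mem_step]
        exact Or.inr ⟨r, hr, hr2, t, ⟨hjt, hti⟩, hnt, rfl⟩

/-- If `(b, q)` gets added at column `j` then `(b, q) ∈ A D (j+1)`; conversely, the
key descent lemma: if `c < a < b`, `(b, c) ∈ A D c` and `(a, c) ∉ A D c`, then
`(b, a) ∈ A D a`. -/
lemma descent (D : Finset (ℕ × ℕ)) :
    ∀ c a b : ℕ, c < a → a < b → (b, c) ∈ A D c → (a, c) ∉ A D c → (b, a) ∈ A D a := by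
  intro c
  induction c using Nat.strong_induction_on with
  | _ c ih =>
    intro a b hca hab hbc hac
    obtain ⟨c', hc'c, hrD, hc'c2, hcb, hnot, hmem⟩ := exists_added hbc
    by_cases hac' : (a, c') ∈ A D c'
    · exact absurd (ih c' hc'c c a hc'c2 hca hac' hnot) hac
    · have : (b, a) ∈ A D (c' + 1) := by
        rw [A, mem_step]
        exact Or.inr ⟨(b, c'), hrD, rfl, a, ⟨lt_trans hc'c hca, hab⟩, hac', rfl⟩
      exact A_mono D (Nat.succ_le_of_lt (lt_trans hc'c hca)) this

/-- Closure property of `M`: if `(i, q) ∈ M` and `q < m < i`, then `(i, m) ∈ M`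
or `(m, q) ∈ M`. -/
lemma closure (n : ℕ) (D : Finset (ℕ × ℕ)) {i q m : ℕ}
    (h : (i, q) ∈ Mset n D) (hqm : q < m) (hmi : m < i) :
    (i, m) ∈ Mset n D ∨ (m, q) ∈ Mset n D := by
  rw [mset_eq] at h ⊢
  obtain ⟨j, hj, hrD, hjq, hqi, hnq, _⟩ := exists_added h
  by_cases hmj : (m, j) ∈ A D j
  · -- `(m, j)` was added at some earlier column `j'`
    obtain ⟨j', hj'j, hrD', hj'j2, hjm, hnj, _⟩ := exists_added hmj
    by_cases hqj' : (q, j') ∈ A D j'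
    · -- descent gives `(q, j) ∈ A D j`, contradiction
      exact absurd (descent D j' j q hj'j2 hjq hqj' hnj) hnq
    · right
      have : (m, q) ∈ A D (j' + 1) := by
        rw [A, mem_step]
        exact Or.inr ⟨(m, j'), hrD', rfl, q, ⟨lt_trans hj'j2 hjq, hqm⟩, hqj', rfl⟩
      exact A_mono D (by omega) this
  · left
    have : (i, m) ∈ A D (j + 1) := by
      rw [A, mem_step]
      exact Or.inr ⟨(i, j), hrD, rfl, m, ⟨lt_trans hjq hqm, hmi⟩, hmj, rfl⟩
    exact A_mono D (by omega) this

end RookAux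

/-- Proposition 2.6: for every rook placement `D`, the subspace `𝔭` is a Lie
subalgebra of `𝔫`, i.e. it is closed under the commutator `[x,y] = xy − yx`. -/
theorem inP_commutator (n : ℕ) (D : Finset (ℕ × ℕ)) (hD : IsRP n D)
    (x y : Matrix (Fin n) (Fin n) ℂ) (hx : inP n D x) (hy : inP n D y) :
    inP n D (x * y - y * x) := by
  intro a b hab
  have key : ∀ c : Fin n, ¬ ((a : ℕ) < c ∧ (c : ℕ) < b) →
      x a c = 0 ∨ y c b = 0 := by
    intro c hc
    rcases Nat.lt_or_ge (a : ℕ) (c : ℕ) with h1 | h1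
    · exact Or.inr (hy c b (Or.inl (fun hlt => hc ⟨h1, Fin.lt_def.mp hlt⟩)))
    · exact Or.inl (hx a c (Or.inl (fun hlt => absurd (Fin.lt_def.mp hlt) (by omega))))
  have key' : ∀ c : Fin n, ¬ ((a : ℕ) < c ∧ (c : ℕ) < b) →
      y a c = 0 ∨ x c b = 0 := by
    intro c hc
    rcases Nat.lt_or_ge (a : ℕ) (c : ℕ) with h1 | h1
    · exact Or.inr (hx c b (Or.inl (fun hlt => hc ⟨h1, Fin.lt_def.mp hlt⟩)))
    · exact Or.inl (hy a c (Or.inl (fun hlt => absurd (Fin.lt_def.mp hlt) (by omega))))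
  have main : ∀ c : Fin n, (a : ℕ) < c → (c : ℕ) < b →
      (((b : ℕ) + 1, (c : ℕ) + 1) ∈ Mset n D ∨ ((c : ℕ) + 1, (a : ℕ) + 1) ∈ Mset n D) := by
    intro c hac hcb
    rcases hab with hab | hab
    · exfalso
      apply hab
      rw [Fin.lt_def]
      omega
    · rcases RookAux.closure n D (m := (c : ℕ) + 1) hab (by omega) (by omega) with h | h
      · exact Or.inl h
      · exact Or.inr h
  simp only [Matrix.sub_apply, Matrix.mul_apply]
  rw [Finset.sum_eq_zero, Finset.sum_eq_zero, sub_zero]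
  · intro c _
    by_cases hc : (a : ℕ) < c ∧ (c : ℕ) < b
    · rcases main c hc.1 hc.2 with h | h
      · rw [hx c b (Or.inr h), mul_zero]
      · rw [hy a c (Or.inr h), zero_mul]
    · rcases key' c hc with h | h
      · rw [h, zero_mul]
      · rw [h, mul_zero]
  · intro c _
    by_cases hc : (a : ℕ) < c ∧ (c : ℕ) < b
    · rcases main c hc.1 hc.2 with h | h
      · rw [hy c b (Or.inr h), mul_zero]
      · rw [hx a c (Or.inr h), zero_mul]
    · rcases key c hc with h | h
      · rw [h, zero_mul]
      · rw [h, mul_zero]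
end

section
/- For every rook placement D ⊆ Φ⁺ and every map ξ : D → ℂ∖{0}, the subspace 𝔭 is a maximal f_{D,ξ}-isotropic subspace of 𝔫: tr(f_{D,ξ}·(xy − yx)) = 0 for all x, y ∈ 𝔭, and any subspace of 𝔫 strictly containing 𝔭 fails this property. -/
/-- The subspace `𝔭` as a submodule of the space of matrices. -/
noncomputable def pSubmod (n : ℕ) (D : Finset (ℕ × ℕ)) : Submodule ℂ (Matrix (Fin n) (Fin n) ℂ) where
  carrier := {x | inP n D x}
  add_mem' := by
    intro x y hx hy a b h
    have := hx a b h
    have := hy a b h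
    simp [Matrix.add_apply, *]
  zero_mem' := by intro a b _; simp
  smul_mem' := by
    intro c x hx a b h
    simp [Matrix.smul_apply, hx a b h]

/-- A matrix belongs to `𝔫` iff it is strictly upper-triangular. -/
def IsStrictUpper {n : ℕ} (x : Matrix (Fin n) (Fin n) ℂ) : Prop :=
  ∀ a b : Fin n, ¬ a < b → x a b = 0

namespace RPaux

/-- One step of the `Mset` fold. -/
def gstep (D : Finset (ℕ × ℕ)) (acc : Finset (ℕ × ℕ)) (j : ℕ) : Finset (ℕ × ℕ) :=
  acc ∪ (D.filter (fun p => p.2 = j)).biUnion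
    (fun p => ((Finset.Ioo j p.1).filter (fun q => (q, j) ∉ acc)).image
      (fun q => (p.1, q)))

/-- Partial `Mset` after processing columns `0, …, k-1`. -/
def Aset (D : Finset (ℕ × ℕ)) (k : ℕ) : Finset (ℕ × ℕ) :=
  (List.range k).foldl (gstep D) ∅

lemma Mset_eq_Aset (n : ℕ) (D : Finset (ℕ × ℕ)) : Mset n D = Aset D (n + 1) := rfl

lemma Aset_zero (D : Finset (ℕ × ℕ)) : Aset D 0 = ∅ := rfl

lemma Aset_succ (D : Finset (ℕ × ℕ)) (k : ℕ) :
    Aset D (k + 1) = gstep D (Aset D k) k := by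
  simp [Aset, List.range_succ]

lemma subset_gstep (D acc : Finset (ℕ × ℕ)) (j : ℕ) : acc ⊆ gstep D acc j :=
  Finset.subset_union_left

lemma Aset_mono (D : Finset (ℕ × ℕ)) : ∀ {k l : ℕ}, k ≤ l → Aset D k ⊆ Aset D l := by
  intro k l h
  induction l, h using Nat.le_induction with
  | base => exact subset_rfl
  | succ l hkl ih =>
    rw [Aset_succ]
    exact ih.trans (subset_gstep D _ l)

lemma mem_gstep {D acc : Finset (ℕ × ℕ)} {j : ℕ} {x : ℕ × ℕ} (hx : x ∈ gstep D acc j) :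
    x ∈ acc ∨ ((x.1, j) ∈ D ∧ j < x.2 ∧ x.2 < x.1 ∧ (x.2, j) ∉ acc) := by
  rcases Finset.mem_union.1 hx with h | h
  · exact Or.inl h
  · right
    obtain ⟨p, hp, hx⟩ := Finset.mem_biUnion.1 h
    obtain ⟨q, hq, rfl⟩ := Finset.mem_image.1 hx
    obtain ⟨hpD, hpj⟩ := Finset.mem_filter.1 hp
    obtain ⟨hq1, hq2⟩ := Finset.mem_filter.1 hq
    obtain ⟨hjq, hqp⟩ := Finset.mem_Ioo.1 hq1
    refine ⟨?_, hjq, hqp, hq2⟩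
    have : (p.1, j) = p := by rw [← hpj]
    rw [this]; exact hpD

lemma mem_Aset {D : Finset (ℕ × ℕ)} : ∀ {k : ℕ} {x : ℕ × ℕ}, x ∈ Aset D k →
    ∃ j, j < k ∧ (x.1, j) ∈ D ∧ j < x.2 ∧ x.2 < x.1 ∧ (x.2, j) ∉ Aset D j := by
  intro k
  induction k with
  | zero => intro x hx; simp [Aset_zero] at hx
  | succ k ih =>
    intro x hx
    rw [Aset_succ] at hx
    rcases mem_gstep hx with h | ⟨h1, h2, h3, h4⟩
    · obtain ⟨j, hj, rest⟩ := ih h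
      exact ⟨j, Nat.lt_succ_of_lt hj, rest⟩
    · exact ⟨k, Nat.lt_succ_self k, h1, h2, h3, h4⟩

lemma Aset_stable {D : Finset (ℕ × ℕ)} (j : ℕ) : ∀ {k : ℕ} {x : ℕ × ℕ},
    x ∈ Aset D k → x ∈ Aset D j ∨ j < x.2 := by
  intro k
  induction k with
  | zero => intro x hx; simp [Aset_zero] at hx
  | succ k ih =>
    intro x hx
    have hx' := hx
    rw [Aset_succ] at hx'
    rcases mem_gstep hx' with h | ⟨_, h2, _, _⟩
    · exact ih h
    · by_cases hjk : j ≤ k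
      · exact Or.inr (lt_of_le_of_lt hjk h2)
      · exact Or.inl (Aset_mono D (by omega) hx)

lemma Mset_mem_elim {n : ℕ} {D : Finset (ℕ × ℕ)} {a b : ℕ} (h : (a, b) ∈ Mset n D) :
    ∃ j, (a, j) ∈ D ∧ j < b ∧ b < a ∧ (b, j) ∉ Mset n D := by
  rw [Mset_eq_Aset] at h
  obtain ⟨j, _, h1, h2, h3, h4⟩ := mem_Aset h
  refine ⟨j, h1, h2, h3, ?_⟩
  rw [Mset_eq_Aset]
  intro hc
  rcases Aset_stable j hc with hc' | hc'
  · exact h4 hc'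
  · exact absurd hc' (by simp)

lemma Mset_mem_intro {n : ℕ} {D : Finset (ℕ × ℕ)} {i j q : ℕ} (hj : j ≤ n)
    (hij : (i, j) ∈ D) (h1 : j < q) (h2 : q < i) (h3 : (q, j) ∉ Mset n D) :
    (i, q) ∈ Mset n D := by
  rw [Mset_eq_Aset]
  have hq : (q, j) ∉ Aset D j := by
    intro hc
    exact h3 (by rw [Mset_eq_Aset]; exact Aset_mono D (by omega) hc)
  apply Aset_mono D (show j + 1 ≤ n + 1 by omega)
  rw [Aset_succ]
  apply Finset.mem_union_right
  exact Finset.mem_biUnion.2 ⟨(i, j), Finset.mem_filter.2 ⟨hij, rfl⟩,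
    Finset.mem_image.2 ⟨q, Finset.mem_filter.2 ⟨Finset.mem_Ioo.2 ⟨h1, h2⟩, hq⟩, rfl⟩⟩

lemma mem_PhiPos {n i j : ℕ} (h : (i, j) ∈ PhiPos n) :
    1 ≤ i ∧ i ≤ n ∧ 1 ≤ j ∧ j ≤ n ∧ j < i := by
  simp only [PhiPos, Finset.mem_filter, Finset.mem_product, Finset.mem_Icc] at h
  omega

lemma tr_expand (n : ℕ) (D : Finset (ℕ × ℕ)) (ξ : ℕ × ℕ → ℂ)
    (z : Matrix (Fin n) (Fin n) ℂ) :
    Matrix.trace (fDxi n D ξ * z) = ∑ d : Fin n, ∑ b : Fin n, fDxi n D ξ d b * z b d := by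
  simp [Matrix.trace, Matrix.diag, Matrix.mul_apply]

end RPaux

open RPaux in
/-- Proposition 2.7: `𝔭` is a maximal `f_{D,ξ}`-isotropic subspace of `𝔫`:
`tr(f_{D,ξ}·[x,y]) = 0` for all `x, y ∈ 𝔭`, and every subspace of `𝔫` strictly
containing `𝔭` fails this property. -/
theorem pSubmod_maximal_isotropic (n : ℕ) (D : Finset (ℕ × ℕ)) (hD : IsRP n D)
    (ξ : ℕ × ℕ → ℂ) (hξ : ∀ p ∈ D, ξ p ≠ 0) :
    (∀ x ∈ pSubmod n D, ∀ y ∈ pSubmod n D,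
        Matrix.trace (fDxi n D ξ * (x * y - y * x)) = 0) ∧
    ∀ V : Submodule ℂ (Matrix (Fin n) (Fin n) ℂ),
      (∀ v ∈ V, IsStrictUpper v) → pSubmod n D < V →
      ¬ (∀ x ∈ V, ∀ y ∈ V, Matrix.trace (fDxi n D ξ * (x * y - y * x)) = 0) := by
  constructor
  · -- isotropy of 𝔭
    intro x hx y hy
    have hx' : inP n D x := hx
    have hy' : inP n D y := hy
    rw [tr_expand]
    apply Finset.sum_eq_zero
    intro d _
    apply Finset.sum_eq_zero
    intro b _
    by_cases hf : ((d : ℕ) + 1, (b : ℕ) + 1) ∈ D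
    · have hz : (x * y - y * x) b d = 0 := by
        rw [Matrix.sub_apply, Matrix.mul_apply, Matrix.mul_apply, sub_eq_zero]
        apply Finset.sum_congr rfl
        intro c _
        by_cases hbc : b < c
        · by_cases hcd : c < d
          · by_cases hm : ((c : ℕ) + 1, (b : ℕ) + 1) ∈ Mset n D
            · rw [hx' b c (Or.inr hm), hy' b c (Or.inr hm), zero_mul, zero_mul]
            · have hbn : (b : ℕ) + 1 ≤ n := by
                have := mem_PhiPos (hD.1 hf); omega
              have hm2 : ((d : ℕ) + 1, (c : ℕ) + 1) ∈ Mset n D :=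
                Mset_mem_intro hbn hf (by exact Nat.succ_lt_succ hbc)
                  (Nat.succ_lt_succ hcd) hm
              rw [hx' c d (Or.inr hm2), hy' c d (Or.inr hm2), mul_zero, mul_zero]
          · rw [hx' c d (Or.inl hcd), hy' c d (Or.inl hcd), mul_zero, mul_zero]
        · rw [hx' b c (Or.inl hbc), hy' b c (Or.inl hbc), zero_mul, zero_mul]
      rw [hz, mul_zero]
    · simp [fDxi, hf]
  · -- maximality
    intro V hV hlt hiso
    obtain ⟨v, hvV, hvP⟩ := SetLike.exists_of_lt hlt
    have hPV : pSubmod n D ≤ V := le_of_lt hlt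
    have hvu : IsStrictUpper v := hV v hvV
    -- the "M-part" of v
    set w : Matrix (Fin n) (Fin n) ℂ := Matrix.of (fun a b : Fin n =>
      if a < b ∧ ((b : ℕ) + 1, (a : ℕ) + 1) ∈ Mset n D then v a b else 0) with hw
    have hw_apply : ∀ a b : Fin n,
        w a b = if a < b ∧ ((b : ℕ) + 1, (a : ℕ) + 1) ∈ Mset n D then v a b else 0 :=
      fun a b => rfl
    have hw_cond : ∀ a b : Fin n, w a b ≠ 0 →
        a < b ∧ ((b : ℕ) + 1, (a : ℕ) + 1) ∈ Mset n D := by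
      intro a b h
      by_contra hc
      exact h (by rw [hw_apply, if_neg hc])
    have hvw : v - w ∈ pSubmod n D := by
      show inP n D (v - w)
      intro a b h
      rw [Matrix.sub_apply]
      rcases h with h | h
      · rw [hvu a b h, hw_apply, if_neg (fun hc => h hc.1), sub_zero]
      · by_cases hab : a < b
        · rw [hw_apply, if_pos ⟨hab, h⟩, sub_self]
        · rw [hvu a b hab, hw_apply, if_neg (fun hc => hab hc.1), sub_zero]
    have hwV : w ∈ V := by
      have := V.sub_mem hvV (hPV hvw)
      rwa [sub_sub_cancel] at this
    -- v ∉ 𝔭 gives a nonzero entry of w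
    have hvP' : ¬ inP n D v := hvP
    unfold inP at hvP'
    push_neg at hvP'
    obtain ⟨a, b, hcond, hne⟩ := hvP'
    have hab : a < b := by
      by_contra h
      exact hne (hvu a b h)
    have hM : ((b : ℕ) + 1, (a : ℕ) + 1) ∈ Mset n D := by
      rcases hcond with h | h
      · exact absurd hab (not_lt.2 h)
      · exact h
    have hwab : w a b ≠ 0 := by rw [hw_apply, if_pos ⟨hab, hM⟩]; exact hne
    -- pick a nonzero entry of w minimizing the row index
    have hAne : ((Finset.univ : Finset (Fin n × Fin n)).filter
        (fun p => w p.1 p.2 ≠ 0)).Nonempty :=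
      ⟨(a, b), Finset.mem_filter.2 ⟨Finset.mem_univ _, hwab⟩⟩
    obtain ⟨p₀, hp₀, hmin⟩ := Finset.exists_min_image _ (fun p : Fin n × Fin n => (p.1 : ℕ)) hAne
    obtain ⟨-, hp₀ne⟩ := Finset.mem_filter.1 hp₀
    set a₀ : Fin n := p₀.1
    set b₀ : Fin n := p₀.2
    have hmin' : ∀ c d : Fin n, w c d ≠ 0 → (a₀ : ℕ) ≤ (c : ℕ) := by
      intro c d h
      exact hmin (c, d) (Finset.mem_filter.2 ⟨Finset.mem_univ _, h⟩)
    obtain ⟨ha₀b₀, hM₀⟩ := hw_cond a₀ b₀ hp₀ne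
    -- structure of the M-position (b₀+1, a₀+1)
    obtain ⟨j₀, hj₀D, hj₀lt, hlt₀, hj₀M⟩ := Mset_mem_elim hM₀
    have hj₀pos : 1 ≤ j₀ ∧ j₀ ≤ n := by
      have := mem_PhiPos (hD.1 hj₀D); omega
    have hn0 : j₀ - 1 < n := by omega
    set c₀ : Fin n := ⟨j₀ - 1, hn0⟩ with hc₀
    have hc₀1 : (c₀ : ℕ) + 1 = j₀ := by simp [hc₀]; omega
    -- the test vector e = e_{j₀, q₀} lies in 𝔭
    set e : Matrix (Fin n) (Fin n) ℂ := Matrix.single c₀ a₀ 1 with he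
    have heP : e ∈ pSubmod n D := by
      show inP n D e
      intro a' b' h
      rw [he]
      show (if c₀ = a' ∧ a₀ = b' then (1 : ℂ) else 0) = 0
      rw [if_neg]
      rintro ⟨rfl, rfl⟩
      rcases h with h | h
      · exact h (by
          show (c₀ : ℕ) < (a₀ : ℕ)
          omega)
      · rw [show ((a₀ : ℕ) + 1, (c₀ : ℕ) + 1) = ((a₀ : ℕ) + 1, j₀) by rw [hc₀1]] at h
        exact hj₀M h
    have heV : e ∈ V := hPV heP
    -- w vanishes on column c₀
    have hwc : ∀ x : Fin n, w x c₀ = 0 := by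
      intro x
      by_contra hne'
      obtain ⟨hxlt, _⟩ := hw_cond x c₀ hne'
      have h1 : (a₀ : ℕ) ≤ (x : ℕ) := hmin' x c₀ hne'
      have h2 : (x : ℕ) < (c₀ : ℕ) := hxlt
      have h3 : (c₀ : ℕ) < (a₀ : ℕ) := by
        show j₀ - 1 < (a₀ : ℕ)
        omega
      omega
    -- evaluate the form on (w, e)
    have h1 : Matrix.trace (fDxi n D ξ * (w * e)) = 0 := by
      rw [tr_expand]
      apply Finset.sum_eq_zero
      intro d _
      apply Finset.sum_eq_zero
      intro b' _
      have : (w * e) b' d = 0 := by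
        rw [Matrix.mul_apply]
        apply Finset.sum_eq_zero
        intro c _
        by_cases hc : c = c₀
        · rw [hc, hwc b', zero_mul]
        · rw [he]
          show w b' c * (if c₀ = c ∧ a₀ = d then (1 : ℂ) else 0) = 0
          rw [if_neg (fun h => hc h.1.symm), mul_zero]
      rw [this, mul_zero]
    have hew : ∀ b' d : Fin n, (e * w) b' d = if b' = c₀ then w a₀ d else 0 := by
      intro b' d
      rw [Matrix.mul_apply]
      by_cases hb : b' = c₀
      · subst hb
        rw [if_pos rfl]
        rw [Finset.sum_eq_single a₀]
        · rw [he]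
          show (if c₀ = c₀ ∧ a₀ = a₀ then (1 : ℂ) else 0) * w a₀ d = w a₀ d
          rw [if_pos ⟨rfl, rfl⟩, one_mul]
        · intro c _ hc
          rw [he]
          show (if c₀ = c₀ ∧ a₀ = c then (1 : ℂ) else 0) * w c d = 0
          rw [if_neg (fun h => hc h.2.symm), zero_mul]
        · intro h; exact absurd (Finset.mem_univ a₀) h
      · rw [if_neg hb]
        apply Finset.sum_eq_zero
        intro c _
        rw [he]
        show (if c₀ = b' ∧ a₀ = c then (1 : ℂ) else 0) * w c d = 0
        rw [if_neg (fun h => hb h.1.symm), zero_mul]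
    have h2 : Matrix.trace (fDxi n D ξ * (e * w)) =
        ξ ((b₀ : ℕ) + 1, j₀) * w a₀ b₀ := by
      rw [tr_expand]
      have hinner : ∀ d : Fin n,
          ∑ b' : Fin n, fDxi n D ξ d b' * (e * w) b' d = fDxi n D ξ d c₀ * w a₀ d := by
        intro d
        rw [Finset.sum_eq_single c₀]
        · rw [hew, if_pos rfl]
        · intro b' _ hb'
          rw [hew, if_neg hb', mul_zero]
        · intro h; exact absurd (Finset.mem_univ c₀) h
      rw [Finset.sum_congr rfl (fun d _ => hinner d)]
      rw [Finset.sum_eq_single b₀]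
      · have : fDxi n D ξ b₀ c₀ = ξ ((b₀ : ℕ) + 1, j₀) := by
          show (if ((b₀ : ℕ) + 1, (c₀ : ℕ) + 1) ∈ D then
            ξ ((b₀ : ℕ) + 1, (c₀ : ℕ) + 1) else 0) = ξ ((b₀ : ℕ) + 1, j₀)
          rw [hc₀1, if_pos hj₀D]
        rw [this]
      · intro d _ hd
        have hfd : fDxi n D ξ d c₀ = 0 := by
          show (if ((d : ℕ) + 1, (c₀ : ℕ) + 1) ∈ D then
            ξ ((d : ℕ) + 1, (c₀ : ℕ) + 1) else 0) = 0
          rw [hc₀1]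
          rw [if_neg]
          intro hmem
          by_cases hpq : ((d : ℕ) + 1, j₀) = ((b₀ : ℕ) + 1, j₀)
          · apply hd
            have : (d : ℕ) = (b₀ : ℕ) := by
              have := congrArg Prod.fst hpq; omega
            exact Fin.ext this
          · exact absurd rfl (hD.2 _ hmem _ hj₀D hpq).2
        rw [hfd, zero_mul]
      · intro h; exact absurd (Finset.mem_univ b₀) h
    have hiso' := hiso w hwV e heV
    rw [mul_sub, Matrix.trace_sub, h1, h2, zero_sub, neg_eq_zero] at hiso'
    rcases mul_eq_zero.1 hiso' with h | h
    · exact hξ _ hj₀D h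
    · exact hp₀ne h
end

section
/- Let Y ⊆ Φ⁺ be an ideal and D, D' ⊆ Φ⁺ rook placements. Then Y ∩ D = Y ∩ D' if and only if (R_D)_{i,j} = (R_{D'})_{i,j} for all (i,j) ∈ Y. -/
/-- The partial order `≼` on `Φ⁺`: `(a,b) ≼ (c,d)` iff `a ≤ c` and `b ≥ d`. -/
def Ple (p q : ℕ × ℕ) : Prop := p.1 ≤ q.1 ∧ q.2 ≤ p.2

/-- The strict order `≺` on `Φ⁺`. -/
def Plt (p q : ℕ × ℕ) : Prop := Ple p q ∧ p ≠ q

lemma mem_PhiPos {n : ℕ} {p : ℕ × ℕ} :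
    p ∈ PhiPos n ↔ (1 ≤ p.1 ∧ p.1 ≤ n) ∧ (1 ≤ p.2 ∧ p.2 ≤ n) ∧ p.2 < p.1 := by
  simp [PhiPos, Finset.mem_filter, Finset.mem_product, Finset.mem_Icc, and_assoc]

lemma RD_zero_row {n : ℕ} {D : Finset (ℕ × ℕ)} (hD : D ⊆ PhiPos n) {i j : ℕ}
    (hi : n < i) : RD D i j = 0 := by
  unfold RD
  split
  · rw [Finset.card_eq_zero, Finset.filter_eq_empty_iff]
    intro p hp
    have := mem_PhiPos.mp (hD hp)
    omega
  · rfl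

lemma RD_zero_col {n : ℕ} {D : Finset (ℕ × ℕ)} (hD : D ⊆ PhiPos n) {i : ℕ} :
    RD D i 0 = 0 := by
  unfold RD
  split
  · rw [Finset.card_eq_zero, Finset.filter_eq_empty_iff]
    intro p hp
    have := mem_PhiPos.mp (hD hp)
    omega
  · rfl

lemma RD_rect (D : Finset (ℕ × ℕ)) {i j : ℕ} (hj : 1 ≤ j) (hij : j < i) :
    RD D i j + RD D (i+1) (j-1)
      = RD D (i+1) j + RD D i (j-1) + (if (i,j) ∈ D then 1 else 0) := by
  have h1 : j < i + 1 := by omega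
  have h2 : j - 1 < i := by omega
  have h3 : j - 1 < i + 1 := by omega
  unfold RD
  rw [if_pos hij, if_pos h3, if_pos h1, if_pos h2]
  have key : ∀ c : ℕ × ℕ → Prop, ∀ inst : DecidablePred c,
      (D.filter c).card = ∑ p ∈ D, if c p then 1 else 0 := by
    intro c inst; rw [Finset.card_filter]
  rw [key, key, key, key]
  have hind : (if (i,j) ∈ D then (1:ℕ) else 0) = ∑ p ∈ D, if p = (i,j) then 1 else 0 := by
    rw [Finset.sum_ite_eq' D (i,j) (fun _ => 1)]
  rw [hind, ← Finset.sum_add_distrib, ← Finset.sum_add_distrib, ← Finset.sum_add_distrib]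
  apply Finset.sum_congr rfl
  rintro ⟨a, b⟩ _
  simp only [Prod.mk.injEq]
  split_ifs <;> omega

lemma RD_inter {n : ℕ} (Y : Finset (ℕ × ℕ)) (hY : Y ⊆ PhiPos n)
    (hIdeal : ∀ p ∈ Y, ∀ q ∈ PhiPos n, Ple p q → q ∈ Y)
    (D : Finset (ℕ × ℕ)) (hD : D ⊆ PhiPos n) {i j : ℕ} (hij : (i,j) ∈ Y) :
    RD D i j = RD (Y ∩ D) i j := by
  unfold RD
  split
  · congr 1
    ext p
    simp only [Finset.mem_filter, Finset.mem_inter]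
    constructor
    · rintro ⟨hpD, hc⟩
      exact ⟨⟨hIdeal (i,j) hij p (hD hpD) ⟨hc.1, hc.2⟩, hpD⟩, hc⟩
    · rintro ⟨⟨_, hpD⟩, hc⟩; exact ⟨hpD, hc⟩
  · rfl

lemma subset_aux {n : ℕ} (Y : Finset (ℕ × ℕ)) (hY : Y ⊆ PhiPos n)
    (hIdeal : ∀ p ∈ Y, ∀ q ∈ PhiPos n, Ple p q → q ∈ Y)
    (D D' : Finset (ℕ × ℕ)) (hD : D ⊆ PhiPos n) (hD' : D' ⊆ PhiPos n)
    (h : ∀ p ∈ Y, RD D p.1 p.2 = RD D' p.1 p.2) :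
    Y ∩ D ⊆ Y ∩ D' := by
  intro p hp
  rw [Finset.mem_inter] at hp ⊢
  obtain ⟨hpY, hpD⟩ := hp
  refine ⟨hpY, ?_⟩
  obtain ⟨i, j⟩ := p
  have hphi := mem_PhiPos.mp (hY hpY)
  have e1 : RD D i j = RD D' i j := h (i,j) hpY
  have e2 : RD D (i+1) j = RD D' (i+1) j := by
    by_cases hc : i < n
    · exact h (i+1,j) (hIdeal (i,j) hpY (i+1,j) (mem_PhiPos.mpr (by omega)) ⟨by omega, le_refl _⟩)
    · rw [RD_zero_row hD (by omega), RD_zero_row hD' (by omega)]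
  have e3 : RD D i (j-1) = RD D' i (j-1) := by
    by_cases hc : 1 < j
    · exact h (i,j-1) (hIdeal (i,j) hpY (i,j-1) (mem_PhiPos.mpr (by omega)) ⟨le_refl _, by omega⟩)
    · have : j - 1 = 0 := by omega
      rw [this, RD_zero_col hD, RD_zero_col hD']
  have e4 : RD D (i+1) (j-1) = RD D' (i+1) (j-1) := by
    by_cases hc : i < n
    · by_cases hc2 : 1 < j
      · exact h (i+1,j-1)
          (hIdeal (i,j) hpY (i+1,j-1) (mem_PhiPos.mpr (by omega)) ⟨by omega, by omega⟩)
      · have : j - 1 = 0 := by omega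
        rw [this, RD_zero_col hD, RD_zero_col hD']
    · rw [RD_zero_row hD (by omega), RD_zero_row hD' (by omega)]
  have idA := RD_rect D (show 1 ≤ j by omega) (show j < i by omega)
  have idB := RD_rect D' (show 1 ≤ j by omega) (show j < i by omega)
  rw [if_pos hpD] at idA
  by_contra hnot
  rw [if_neg hnot] at idB
  omega

/-- If `Y ⊆ Φ⁺` is an ideal and `D, D'` are rook placements, then
`Y ∩ D = Y ∩ D'` iff `(R_D)_{i,j} = (R_{D'})_{i,j}` for all `(i,j) ∈ Y`. -/
theorem ideal_inter_eq_iff_rank_eq (n : ℕ) (Y : Finset (ℕ × ℕ))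
    (hY : Y ⊆ PhiPos n)
    (hIdeal : ∀ p ∈ Y, ∀ q ∈ PhiPos n, Ple p q → q ∈ Y)
    (D D' : Finset (ℕ × ℕ)) (hD : IsRP n D) (hD' : IsRP n D') :
    Y ∩ D = Y ∩ D' ↔ ∀ p ∈ Y, RD D p.1 p.2 = RD D' p.1 p.2 := by
  constructor
  · intro hYD p hpY
    obtain ⟨i, j⟩ := p
    rw [RD_inter Y hY hIdeal D hD.1 hpY, RD_inter Y hY hIdeal D' hD'.1 hpY, hYD]
  · intro h
    exact Finset.Subset.antisymm
      (subset_aux Y hY hIdeal D D' hD.1 hD'.1 h)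
      (subset_aux Y hY hIdeal D' D hD'.1 hD.1 (fun p hp => (h p hp).symm))
end

section
/- Let n₀ = ⌊n/2⌋ and D₀ = {(n+1−r, r) : 1 ≤ r ≤ n₀} = {(n,1), (n−1,2), …, (n−n₀+1, n₀)}. Then D₀ is a rook placement, and every rook placement D ⊆ Φ⁺ satisfies D ≤ D₀; i.e. D₀ is the maximal element of the poset ℛ of rook placements. -/
/-- `D₀ = {(n,1), (n−1,2), …, (n−⌊n/2⌋+1, ⌊n/2⌋)}` is a rook placement, and it is
the maximal element of the poset `ℛ` of rook placements. -/
theorem D0_is_max (n : ℕ) (hn : 1 ≤ n) :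
    IsRP n ((Finset.Icc 1 (n / 2)).image (fun r => (n + 1 - r, r))) ∧
    ∀ D : Finset (ℕ × ℕ), IsRP n D →
      rpLE D ((Finset.Icc 1 (n / 2)).image (fun r => (n + 1 - r, r))) := by
  constructor
  · constructor
    · intro p hp
      obtain ⟨r, hr, rfl⟩ := Finset.mem_image.1 hp
      rw [Finset.mem_Icc] at hr
      have hrn : r ≤ n / 2 := hr.2
      simp only [PhiPos, Finset.mem_filter, Finset.mem_product, Finset.mem_Icc]
      omega
    · intro p hp q hq hne
      obtain ⟨r, hr, rfl⟩ := Finset.mem_image.1 hp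
      obtain ⟨s, hs, rfl⟩ := Finset.mem_image.1 hq
      rw [Finset.mem_Icc] at hr hs
      have hrs : r ≠ s := by
        intro h; exact hne (by rw [h])
      have hrn : r ≤ n / 2 := hr.2
      have hsn : s ≤ n / 2 := hs.2
      constructor <;> simp only [] <;> omega
  · intro D hD i j
    unfold RD
    by_cases hji : j < i
    · rw [if_pos hji, if_pos hji]
      set S := D.filter (fun p => i ≤ p.1 ∧ p.2 ≤ j) with hS
      have hmemS : ∀ p ∈ S, (1 ≤ p.1 ∧ p.1 ≤ n) ∧ (1 ≤ p.2 ∧ p.2 ≤ n) ∧ p.2 < p.1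
          ∧ i ≤ p.1 ∧ p.2 ≤ j := by
        intro p hp
        rw [hS, Finset.mem_filter] at hp
        have := hD.1 hp.1
        simp only [PhiPos, Finset.mem_filter, Finset.mem_product, Finset.mem_Icc] at this
        exact ⟨this.1.1, this.1.2, this.2, hp.2⟩
      have hsub : S ⊆ D := Finset.filter_subset _ _
      -- column bound
      have hcol : S.card ≤ j := by
        have := Finset.card_le_card_of_injOn (fun p : ℕ × ℕ => p.2)
          (fun p hp => by
            obtain ⟨⟨h1, h2⟩, ⟨h3, h4⟩, h5, h6, h7⟩ := hmemS p hp
            exact Finset.mem_Icc.2 ⟨h3, h7⟩)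
          (fun p hp q hq h => by
            by_contra hne
            exact ((hD.2 p (hsub hp) q (hsub hq) hne).2 h))
        simpa using this
      -- row bound
      have hrow : S.card ≤ n + 1 - i := by
        have := Finset.card_le_card_of_injOn (fun p : ℕ × ℕ => p.1)
          (fun p hp => by
            obtain ⟨⟨h1, h2⟩, ⟨h3, h4⟩, h5, h6, h7⟩ := hmemS p hp
            exact Finset.mem_Icc.2 ⟨h6, h2⟩)
          (fun p hp q hq h => by
            by_contra hne
            exact ((hD.2 p (hsub hp) q (hsub hq) hne).1 h))
        simpa [Nat.card_Icc] using this
      -- row bound with j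
      have hrow' : S.card ≤ n - j := by
        have := Finset.card_le_card_of_injOn (fun p : ℕ × ℕ => p.1)
          (fun p hp => by
            obtain ⟨⟨h1, h2⟩, ⟨h3, h4⟩, h5, h6, h7⟩ := hmemS p hp
            exact Finset.mem_Icc.2 ⟨show j + 1 ≤ p.1 by omega, h2⟩)
          (fun p hp q hq h => by
            by_contra hne
            exact ((hD.2 p (hsub hp) q (hsub hq) hne).1 h))
        simpa [Nat.card_Icc] using this
      -- compute the rank entry of D0
      have hcompute :
          (((Finset.Icc 1 (n / 2)).image (fun r => (n + 1 - r, r))).filter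
            (fun p => i ≤ p.1 ∧ p.2 ≤ j)).card
            = min j (min (n + 1 - i) (n / 2)) := by
        rw [Finset.filter_image]
        rw [Finset.card_image_of_injOn (fun r _ s _ h => by
          exact congrArg Prod.snd h)]
        have : (Finset.Icc 1 (n / 2)).filter
            (fun r => i ≤ (n + 1 - r, r).1 ∧ (n + 1 - r, r).2 ≤ j)
            = Finset.Icc 1 (min j (min (n + 1 - i) (n / 2))) := by
          ext r
          simp only [Finset.mem_filter, Finset.mem_Icc]
          omega
        rw [this, Nat.card_Icc]
        omega
      rw [hcompute]
      omega
    · rw [if_neg hji, if_neg hji]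
end

section
/- For every rook placement D ∈ ℛ, one has Ñ⁻(D) ⊆ L̃⁻(D): if (i,j) is a minimal element of D (for the order ≼ on Φ⁺) and T = D∖{(i,j)}, then T < D, |T| < |D|, and every rook placement S with T ≤ S < D and |S| < |D| equals T. -/
/-- Inclusion–exclusion identity recovering membership from the rank matrix. -/
lemma rd_incl_excl (X : Finset (ℕ × ℕ)) (a b : ℕ) (hb : 0 < b) (hba : b < a) :
    RD X a b + RD X (a+1) (b-1)
      = RD X (a+1) b + RD X a (b-1) + (if (a, b) ∈ X then 1 else 0) := by
  have h1 : b - 1 < a := by omega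
  have h2 : b < a + 1 := by omega
  have h3 : b - 1 < a + 1 := by omega
  unfold RD
  rw [if_pos hba, if_pos h3, if_pos h2, if_pos h1]
  rw [Finset.card_filter, Finset.card_filter, Finset.card_filter, Finset.card_filter]
  have hind : (if (a, b) ∈ X then 1 else 0)
      = ∑ p ∈ X, if p = (a, b) then 1 else 0 := by
    rw [Finset.sum_ite_eq' X (a, b) (fun _ => 1)]
  rw [hind, ← Finset.sum_add_distrib, ← Finset.sum_add_distrib, ← Finset.sum_add_distrib]
  apply Finset.sum_congr rfl
  rintro ⟨c, d⟩ _
  simp only [Prod.mk.injEq]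
  split_ifs <;> omega

/-- Effect of erasing one element on the rank matrix. -/
lemma rd_erase (D : Finset (ℕ × ℕ)) (i j : ℕ) (hij : (i, j) ∈ D) (a b : ℕ) :
    RD D a b = RD (D.erase (i, j)) a b + (if b < a ∧ a ≤ i ∧ j ≤ b then 1 else 0) := by
  unfold RD
  by_cases hba : b < a
  · rw [if_pos hba, if_pos hba]
    by_cases hP : a ≤ i ∧ j ≤ b
    · rw [if_pos ⟨hba, hP⟩]
      have hmem : (i, j) ∈ D.filter (fun p => a ≤ p.1 ∧ p.2 ≤ b) :=
        Finset.mem_filter.mpr ⟨hij, hP⟩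
      rw [Finset.filter_erase, Finset.card_erase_of_mem hmem]
      have := Finset.card_pos.mpr ⟨(i, j), hmem⟩
      omega
    · rw [if_neg (by tauto)]
      have hnmem : (i, j) ∉ D.filter (fun p => a ≤ p.1 ∧ p.2 ≤ b) := by
        intro h
        exact hP (Finset.mem_filter.mp h).2
      rw [Finset.filter_erase, Finset.erase_eq_of_notMem hnmem]
      omega
  · rw [if_neg hba, if_neg hba, if_neg (by tauto)]

/-- Lemma 3.5: `Ñ⁻(D) ⊆ L̃⁻(D)`. If `(i,j)` is a `≼`-minimal element of `D` and
`T = D ∖ {(i,j)}`, then `T` is a rook placement with `T < D`, `|T| < |D|`, and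
every rook placement `S` with `T ≤ S < D` and `|S| < |D|` equals `T`. -/
theorem ntilde_subset_ltilde (n : ℕ) (D : Finset (ℕ × ℕ)) (hD : IsRP n D)
    (i j : ℕ) (hij : (i, j) ∈ D) (hmin : ∀ q ∈ D, Ple q (i, j) → q = (i, j)) :
    IsRP n (D.erase (i, j)) ∧ rpLT (D.erase (i, j)) D ∧
    (D.erase (i, j)).card < D.card ∧
    ∀ S, IsRP n S → rpLE (D.erase (i, j)) S → rpLT S D → S.card < D.card →
      S = D.erase (i, j) := by
  have hTsub : D.erase (i, j) ⊆ D := Finset.erase_subset _ _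
  have hTRP : IsRP n (D.erase (i, j)) :=
    ⟨hTsub.trans hD.1, fun p hp q hq hpq => hD.2 p (hTsub hp) q (hTsub hq) hpq⟩
  have hTleD : rpLE (D.erase (i, j)) D := by
    intro a b
    unfold RD
    split
    · exact Finset.card_le_card (Finset.filter_subset_filter _ hTsub)
    · exact le_refl 0
  have hTneD : D.erase (i, j) ≠ D := by
    intro h
    rw [← h] at hij
    exact Finset.notMem_erase (i, j) D hij
  refine ⟨hTRP, ⟨hTleD, hTneD⟩, Finset.card_erase_lt_of_mem hij, ?_⟩
  intro S hS hTS hSD hcard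
  have hSleD : rpLE S D := hSD.1
  -- off the rectangle Q, the rank matrices of S and T agree
  have hagree : ∀ a b, ¬(b < a ∧ a ≤ i ∧ j ≤ b) → RD S a b = RD (D.erase (i, j)) a b := by
    intro a b h
    have h1 := hTS a b
    have h2 := hSleD a b
    rw [rd_erase D i j hij a b, if_neg h] at h2
    omega
  -- D.erase (i, j) ⊆ S
  have hTsubS : D.erase (i, j) ⊆ S := by
    rintro ⟨a, b⟩ hp
    have hpD : (a, b) ∈ D := hTsub hp
    have hpPhi : (a, b) ∈ PhiPos n := hD.1 hpD
    have hb : 0 < b ∧ b < a := by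
      unfold PhiPos at hpPhi
      simp only [Finset.mem_filter, Finset.mem_product, Finset.mem_Icc] at hpPhi
      omega
    have hnQ : ¬(a ≤ i ∧ j ≤ b) := by
      intro h
      have := hmin (a, b) hpD ⟨h.1, h.2⟩
      rw [this] at hp
      exact Finset.notMem_erase (i, j) D hp
    have e1 : RD S a b = RD (D.erase (i, j)) a b := hagree a b (by tauto)
    have e2 : RD S (a+1) b = RD (D.erase (i, j)) (a+1) b :=
      hagree _ _ (by intro h; exact hnQ ⟨by omega, h.2.2⟩)
    have e3 : RD S a (b-1) = RD (D.erase (i, j)) a (b-1) :=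
      hagree _ _ (by intro h; exact hnQ ⟨h.2.1, by omega⟩)
    have e4 : RD (D.erase (i, j)) (a+1) (b-1) ≤ RD S (a+1) (b-1) := hTS _ _
    have kS := rd_incl_excl S a b hb.1 hb.2
    have kT := rd_incl_excl (D.erase (i, j)) a b hb.1 hb.2
    rw [if_pos hp] at kT
    by_cases hmem : (a, b) ∈ S
    · exact hmem
    · rw [if_neg hmem] at kS
      omega
  -- cardinalities force equality
  have hcardT : (D.erase (i, j)).card = D.card - 1 := Finset.card_erase_of_mem hij
  exact (Finset.eq_of_subset_of_card_le hTsubS (by omega)).symm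
end

section
/- For every rook placement D ∈ ℛ, one has L̃⁻(D) = Ñ⁻(D). Equivalently: if T is a rook placement with T < D and |T| < |D|, then there exists a minimal element (i,j) of D (for ≼) such that T ≤ D∖{(i,j)} < D. -/
namespace L38

def c (X : Finset (ℕ × ℕ)) (a b : ℕ) : ℕ :=
  (X.filter (fun p => a ≤ p.1 ∧ p.2 ≤ b)).card

lemma rpLE_iff {T D : Finset (ℕ × ℕ)} :
    rpLE T D ↔ ∀ a b, b < a → c T a b ≤ c D a b := by
  constructor
  · intro h a b hba
    have := h a b
    rwa [RD, RD, if_pos hba, if_pos hba] at this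
  · intro h i j
    rw [RD, RD]
    split
    · exact h i j ‹_›
    · exact le_refl 0

lemma c_mono {T D : Finset (ℕ × ℕ)} (h : T ⊆ D) (a b : ℕ) : c T a b ≤ c D a b :=
  Finset.card_le_card (Finset.filter_subset_filter _ h)

lemma rpLE_of_subset {T D : Finset (ℕ × ℕ)} (h : T ⊆ D) : rpLE T D :=
  rpLE_iff.2 (fun a b _ => c_mono h a b)

lemma c_erase_mem {D : Finset (ℕ × ℕ)} {q : ℕ × ℕ} {a b : ℕ} (hq : q ∈ D)
    (h1 : a ≤ q.1) (h2 : q.2 ≤ b) :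
    c (D.erase q) a b = c D a b - 1 := by
  unfold c
  rw [Finset.filter_erase, Finset.card_erase_of_mem (Finset.mem_filter.2 ⟨hq, h1, h2⟩)]

lemma c_erase_notMem {D : Finset (ℕ × ℕ)} {q : ℕ × ℕ} {a b : ℕ}
    (h : ¬(a ≤ q.1 ∧ q.2 ≤ b)) :
    c (D.erase q) a b = c D a b := by
  unfold c
  rw [Finset.filter_erase, Finset.erase_eq_of_notMem]
  simp only [Finset.mem_filter]
  tauto

lemma c_pos {D : Finset (ℕ × ℕ)} {q : ℕ × ℕ} {a b : ℕ} (hq : q ∈ D)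
    (h1 : a ≤ q.1) (h2 : q.2 ≤ b) : 1 ≤ c D a b :=
  Finset.card_pos.2 ⟨q, Finset.mem_filter.2 ⟨hq, h1, h2⟩⟩

lemma c_point (X : Finset (ℕ × ℕ)) (p q : ℕ) (hq : 1 ≤ q) :
    c X p q + c X (p+1) (q-1)
      = c X (p+1) q + c X p (q-1) + (X.filter (fun x => x = (p, q))).card := by
  unfold c
  rw [Finset.card_filter, Finset.card_filter, Finset.card_filter, Finset.card_filter,
    Finset.card_filter, ← Finset.sum_add_distrib, ← Finset.sum_add_distrib,
    ← Finset.sum_add_distrib]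
  apply Finset.sum_congr rfl
  rintro ⟨x1, x2⟩ _
  simp only [Prod.mk.injEq]
  split_ifs <;> omega

lemma subset_of_c_eq {T D : Finset (ℕ × ℕ)} (hT : ∀ x ∈ T, 1 ≤ x.2 ∧ x.2 < x.1)
    (hc : ∀ a b, b < a → c T a b = c D a b) : T ⊆ D := by
  intro x hx
  obtain ⟨p, q⟩ := x
  obtain ⟨h1, h2⟩ := hT _ hx
  simp only at h1 h2
  have eT := c_point T p q h1
  have eD := c_point D p q h1
  have e1 := hc p q h2
  have e2 := hc (p+1) (q-1) (by omega)
  have e3 := hc (p+1) q (by omega)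
  have e4 := hc p (q-1) (by omega)
  have hmemT : 1 ≤ (T.filter (fun x => x = (p, q))).card :=
    Finset.card_pos.2 ⟨(p, q), Finset.mem_filter.2 ⟨hx, rfl⟩⟩
  have hmemD : 0 < (D.filter (fun x => x = (p, q))).card := by omega
  obtain ⟨y, hy⟩ := Finset.card_pos.1 hmemD
  obtain ⟨hyD, hyq⟩ := Finset.mem_filter.1 hy
  rwa [← hyq]

lemma eq_of_le_le {T S : Finset (ℕ × ℕ)} (hT : ∀ x ∈ T, 1 ≤ x.2 ∧ x.2 < x.1)
    (hS : ∀ x ∈ S, 1 ≤ x.2 ∧ x.2 < x.1)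
    (h1 : rpLE T S) (h2 : rpLE S T) : T = S :=
  Finset.Subset.antisymm
    (subset_of_c_eq hT (fun a b hba =>
      le_antisymm (rpLE_iff.1 h1 a b hba) (rpLE_iff.1 h2 a b hba)))
    (subset_of_c_eq hS (fun a b hba =>
      le_antisymm (rpLE_iff.1 h2 a b hba) (rpLE_iff.1 h1 a b hba)))

def covered (F : Finset (ℕ × ℕ)) (p : ℕ × ℕ) : Prop :=
  ∃ q ∈ F, q.1 ≤ p.1 ∧ p.2 ≤ q.2

instance (F : Finset (ℕ × ℕ)) : DecidablePred (covered F) := fun _ => by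
  unfold covered; infer_instance

lemma union_count (T D : Finset (ℕ × ℕ)) (hle : ∀ a b, b < a → c T a b ≤ c D a b) :
    ∀ F : Finset (ℕ × ℕ), (∀ r ∈ F, r.2 < r.1) → (∀ r ∈ F, c D r.1 r.2 ≤ c T r.1 r.2) →
    (D.filter (covered F)).card ≤ (T.filter (covered F)).card := by
  intro F
  induction F using Finset.strongInduction with
  | _ F ih =>
    intro hF1 hF2
    rcases F.eq_empty_or_nonempty with rfl | hne
    · have hfalse : ∀ (X : Finset (ℕ × ℕ)), X.filter (covered (∅ : Finset (ℕ × ℕ))) = ∅ := by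
        intro X
        apply Finset.filter_false_of_mem
        intro p _
        simp [covered]
      rw [hfalse, hfalse]
    · obtain ⟨rmax, hrmaxF, hrmax⟩ := F.exists_max_image Prod.snd hne
      set S := F.filter (fun r => r.2 = rmax.2) with hSdef
      have hrmaxS : rmax ∈ S := Finset.mem_filter.2 ⟨hrmaxF, rfl⟩
      obtain ⟨q0, hq0S, hq0min⟩ := S.exists_min_image Prod.fst ⟨rmax, hrmaxS⟩
      obtain ⟨hq0F, hq0b⟩ := Finset.mem_filter.1 hq0S
      have hsnd : ∀ r ∈ F, r.2 ≤ q0.2 := by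
        intro r hr; rw [hq0b]; exact hrmax r hr
      have hfst : ∀ r ∈ F, r.2 = q0.2 → q0.1 ≤ r.1 := by
        intro r hr hr2
        exact hq0min r (Finset.mem_filter.2 ⟨hr, by rw [hr2, hq0b]⟩)
      set F' := F.filter (fun r => r.1 < q0.1) with hF'def
      have hq0F' : q0 ∉ F' := by
        simp [hF'def]
      have hss : F' ⊂ F :=
        ⟨Finset.filter_subset _ _, fun h => hq0F' (h hq0F)⟩
      have hcov : ∀ (X : Finset (ℕ × ℕ)), X.filter (covered F)
          = X.filter (covered F') ∪ X.filter (fun p => q0.1 ≤ p.1 ∧ p.2 ≤ q0.2) := by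
        intro X
        rw [← Finset.filter_or]
        apply Finset.filter_congr
        intro p _
        constructor
        · rintro ⟨r, hrF, hr1, hr2⟩
          by_cases hcase : r.1 < q0.1
          · exact Or.inl ⟨r, Finset.mem_filter.2 ⟨hrF, hcase⟩, hr1, hr2⟩
          · exact Or.inr ⟨le_trans (not_lt.1 hcase) hr1, le_trans hr2 (hsnd r hrF)⟩
        · rintro (⟨r, hrF', hr1, hr2⟩ | h)
          · exact ⟨r, Finset.mem_filter.1 hrF' |>.1, hr1, hr2⟩
          · exact ⟨q0, hq0F, h.1, h.2⟩
      rcases F'.eq_empty_or_nonempty with hF'e | hne'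
      · have hnone : ∀ (X : Finset (ℕ × ℕ)), X.filter (covered F') = ∅ := by
          intro X
          apply Finset.filter_false_of_mem
          intro p _
          rw [hF'e]
          simp [covered]
        have hkey : ∀ (X : Finset (ℕ × ℕ)),
            (X.filter (covered F)).card = c X q0.1 q0.2 := by
          intro X
          rw [hcov X, hnone X, Finset.empty_union]
          rfl
        rw [hkey, hkey]
        exact hF2 q0 hq0F
      · obtain ⟨q1, hq1F', hq1max⟩ := F'.exists_max_image Prod.snd hne'
        obtain ⟨hq1F, hq1a⟩ := Finset.mem_filter.1 hq1F'
        have hint : ∀ (X : Finset (ℕ × ℕ)),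
            (X.filter (covered F')) ∩ (X.filter (fun p => q0.1 ≤ p.1 ∧ p.2 ≤ q0.2))
              = X.filter (fun p => q0.1 ≤ p.1 ∧ p.2 ≤ q1.2) := by
          intro X
          rw [← Finset.filter_and]
          apply Finset.filter_congr
          intro p _
          constructor
          · rintro ⟨⟨r, hrF', hr1, hr2⟩, h0⟩
            exact ⟨h0.1, le_trans hr2 (hq1max r hrF')⟩
          · rintro ⟨h1, h2⟩
            refine ⟨⟨q1, hq1F', le_trans (le_of_lt hq1a) h1, h2⟩, h1, le_trans h2 (hsnd q1 hq1F)⟩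
        have hkey : ∀ (X : Finset (ℕ × ℕ)),
            (X.filter (covered F)).card + c X q0.1 q1.2
              = (X.filter (covered F')).card + c X q0.1 q0.2 := by
          intro X
          rw [hcov X]
          have h := Finset.card_union_add_card_inter (X.filter (covered F'))
            (X.filter (fun p => q0.1 ≤ p.1 ∧ p.2 ≤ q0.2))
          rw [hint X] at h
          exact h
        have hIH := ih F' hss (fun r hr => hF1 r (Finset.filter_subset _ _ hr))
          (fun r hr => hF2 r (Finset.filter_subset _ _ hr))
        have hq1v : q1.2 < q0.1 := lt_trans (hF1 q1 hq1F) hq1a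
        have hcross := hle q0.1 q1.2 hq1v
        have hcorner := hF2 q0 hq0F
        have hkD := hkey D
        have hkT := hkey T
        omega

lemma exists_strict (T D : Finset (ℕ × ℕ)) (hD : ∀ p ∈ D, p.2 < p.1)
    (hle : ∀ a b, b < a → c T a b ≤ c D a b) (hcard : T.card < D.card) :
    ∃ p ∈ D, ∀ a b, a ≤ p.1 → p.2 ≤ b → b < a → c T a b < c D a b := by
  by_contra hcon
  push_neg at hcon
  choose f g h1 h2 h3 h4 using hcon
  set F : Finset (ℕ × ℕ) := D.attach.image (fun p => (f p.1 p.2, g p.1 p.2)) with hF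
  have hmemF : ∀ (p : ℕ × ℕ) (hp : p ∈ D), (f p hp, g p hp) ∈ F := fun p hp =>
    Finset.mem_image.2 ⟨⟨p, hp⟩, Finset.mem_attach _ _, rfl⟩
  have hF1 : ∀ r ∈ F, r.2 < r.1 := by
    intro r hr
    obtain ⟨⟨p, hp⟩, _, rfl⟩ := Finset.mem_image.1 hr
    exact h3 p hp
  have hF2 : ∀ r ∈ F, c D r.1 r.2 ≤ c T r.1 r.2 := by
    intro r hr
    obtain ⟨⟨p, hp⟩, _, rfl⟩ := Finset.mem_image.1 hr
    exact h4 p hp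
  have hDfull : D.filter (covered F) = D := by
    apply Finset.filter_true_of_mem
    intro p hp
    exact ⟨(f p hp, g p hp), hmemF p hp, h1 p hp, h2 p hp⟩
  have hmain := union_count T D hle F hF1 hF2
  rw [hDfull] at hmain
  have h5 : (T.filter (covered F)).card ≤ T.card :=
    Finset.card_le_card (Finset.filter_subset _ _)
  omega

lemma exists_min_erase (T D : Finset (ℕ × ℕ)) (hD : ∀ p ∈ D, p.2 < p.1)
    (hle : rpLE T D) (hcard : T.card < D.card) :
    ∃ q ∈ D, (∀ r ∈ D, Ple r q → r = q) ∧ rpLE T (D.erase q) := by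
  obtain ⟨p, hpD, hstrict⟩ := exists_strict T D hD (rpLE_iff.1 hle) hcard
  set B := D.sup Prod.snd with hB
  have hBle : ∀ r ∈ D, r.2 ≤ B := fun r hr => Finset.le_sup hr
  set S := D.filter (fun r => r.1 ≤ p.1 ∧ p.2 ≤ r.2) with hSdef
  have hpS : p ∈ S := Finset.mem_filter.2 ⟨hpD, le_refl _, le_refl _⟩
  obtain ⟨q, hqS, hqmin⟩ := S.exists_min_image (fun r => r.1 + (B - r.2)) ⟨p, hpS⟩
  obtain ⟨hqD, hqp⟩ := Finset.mem_filter.1 hqS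
  refine ⟨q, hqD, ?_, ?_⟩
  · intro r hrD hrq
    by_contra hne
    have hrS : r ∈ S :=
      Finset.mem_filter.2 ⟨hrD, le_trans hrq.1 hqp.1, le_trans hqp.2 hrq.2⟩
    have hm := hqmin r hrS
    have h1 := hrq.1
    have h2 := hrq.2
    have hrB := hBle r hrD
    have hqB := hBle q hqD
    have hd : r.1 ≠ q.1 ∨ r.2 ≠ q.2 := by
      by_contra h
      push_neg at h
      exact hne (Prod.ext h.1 h.2)
    omega
  · rw [rpLE_iff]
    intro a b hba
    by_cases hcase : a ≤ q.1 ∧ q.2 ≤ b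
    · rw [c_erase_mem hqD hcase.1 hcase.2]
      have := hstrict a b (le_trans hcase.1 hqp.1) (le_trans hqp.2 hcase.2) hba
      omega
    · rw [c_erase_notMem hcase]
      exact rpLE_iff.1 hle a b hba

lemma phiPos_bounds {n : ℕ} {D : Finset (ℕ × ℕ)} (h : D ⊆ PhiPos n) :
    ∀ x ∈ D, 1 ≤ x.2 ∧ x.2 < x.1 := by
  intro x hx
  have hm := h hx
  simp [PhiPos, Finset.mem_filter, Finset.mem_product, Finset.mem_Icc] at hm
  omega

lemma isRP_erase {n : ℕ} {D : Finset (ℕ × ℕ)} {q : ℕ × ℕ} (hD : IsRP n D) :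
    IsRP n (D.erase q) :=
  ⟨fun x hx => hD.1 (Finset.mem_of_mem_erase hx),
   fun p hp r hr hne => hD.2 p (Finset.mem_of_mem_erase hp) r (Finset.mem_of_mem_erase hr) hne⟩

end L38

/-- Lemma 3.8: `L̃⁻(D) = Ñ⁻(D)` for every rook placement `D`. -/
theorem ltilde_eq_ntilde (n : ℕ) (D : Finset (ℕ × ℕ)) (hD : IsRP n D) :
    ∀ T : Finset (ℕ × ℕ),
      (IsRP n T ∧ rpLT T D ∧ T.card < D.card ∧
        ∀ S, IsRP n S → rpLE T S → rpLT S D → S.card < D.card → S = T) ↔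
      (∃ i j, (i, j) ∈ D ∧ (∀ q ∈ D, Ple q (i, j) → q = (i, j)) ∧
        T = D.erase (i, j)) := by
  intro T
  have hDpos : ∀ p ∈ D, p.2 < p.1 := fun p hp => (L38.phiPos_bounds hD.1 p hp).2
  constructor
  · rintro ⟨hTRP, hTlt, hTcard, hmax⟩
    obtain ⟨q, hqD, hqmin, hqle⟩ := L38.exists_min_erase T D hDpos hTlt.1 hTcard
    have hSne : D.erase q ≠ D := fun h => (Finset.erase_eq_self.1 h) hqD
    have hScard : (D.erase q).card < D.card := by
      rw [Finset.card_erase_of_mem hqD]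
      have : 0 < D.card := Finset.card_pos.2 ⟨q, hqD⟩
      omega
    have hST := hmax (D.erase q) (L38.isRP_erase hD) hqle
      ⟨L38.rpLE_of_subset (Finset.erase_subset _ _), hSne⟩ hScard
    exact ⟨q.1, q.2, hqD, hqmin, hST.symm⟩
  · rintro ⟨i, j, hijD, hijmin, rfl⟩
    have hTsub : D.erase (i, j) ⊆ D := Finset.erase_subset _ _
    have hTne : D.erase (i, j) ≠ D := fun h => (Finset.erase_eq_self.1 h) hijD
    have hTcard : (D.erase (i, j)).card < D.card := by
      rw [Finset.card_erase_of_mem hijD]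
      have : 0 < D.card := Finset.card_pos.2 ⟨_, hijD⟩
      omega
    refine ⟨L38.isRP_erase hD, ⟨L38.rpLE_of_subset hTsub, hTne⟩, hTcard, ?_⟩
    intro S hSRP hTS hSD hScard
    obtain ⟨q', hq'D, hq'min, hq'le⟩ := L38.exists_min_erase S D hDpos hSD.1 hScard
    have hvalid : q'.2 < q'.1 := hDpos _ hq'D
    have h1 : L38.c (D.erase (i, j)) q'.1 q'.2 ≤ L38.c S q'.1 q'.2 := L38.rpLE_iff.1 hTS _ _ hvalid
    have h2 : L38.c S q'.1 q'.2 ≤ L38.c (D.erase q') q'.1 q'.2 := L38.rpLE_iff.1 hq'le _ _ hvalid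
    have h3 : L38.c (D.erase q') q'.1 q'.2 = L38.c D q'.1 q'.2 - 1 := L38.c_erase_mem hq'D le_rfl le_rfl
    have h4 : 1 ≤ L38.c D q'.1 q'.2 := L38.c_pos hq'D le_rfl le_rfl
    have h5 : L38.c (D.erase (i, j)) q'.1 q'.2 ≤ L38.c D q'.1 q'.2 :=
      L38.c_mono hTsub _ _
    have hmem : q'.1 ≤ ((i, j) : ℕ × ℕ).1 ∧ ((i, j) : ℕ × ℕ).2 ≤ q'.2 := by
      by_contra hc
      rw [L38.c_erase_notMem hc] at h1
      omega
    have hq'eq : q' = (i, j) := hijmin q' hq'D hmem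
    rw [hq'eq] at hq'le
    exact L38.eq_of_le_le (L38.phiPos_bounds hSRP.1) (L38.phiPos_bounds (fun x hx => hD.1 (hTsub hx)))
      hq'le hTS
end
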